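/- arXiv:1811.05131 — 6 statements merged into one kernel-verified Lean document; each statement's English description precedes it below -/
import Mathlib

section
/- Let n ≥ 1 and let w̄=(D̄,c̄,Ā,b̄,ᾱ) be a parameter of (QP_w) with D̄, Ā real symmetric n×n matrices, c̄,b̄ ∈ ℝⁿ, ᾱ ∈ ℝ. Suppose x̄ ∈ ℝⁿ satisfies F(x̄,w̄) = ½x̄ᵀĀx̄ + b̄ᵀx̄ + ᾱ < 0 and D̄x̄ + c̄ = 0 (so x̄ ∈ S(w̄)). Then the stationary point set map S is locally Lipschitz-like around (w̄,x̄) if and only if det D̄ ≠ 0. -/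
open Matrix

attribute [local instance] Matrix.normedAddCommGroup

noncomputable section

/-- The Euclidean space `ℝⁿ`. -/
abbrev En (n : ℕ) := EuclideanSpace ℝ (Fin n)

/-- The parameter space `W` of the quadratic program `(QP_w)`:
a parameter is a tuple `w = (D, c, A, b, α)`. -/
abbrev QPParam (n : ℕ) :=
  Matrix (Fin n) (Fin n) ℝ × (Fin n → ℝ) × Matrix (Fin n) (Fin n) ℝ × (Fin n → ℝ) × ℝ

/-- The constraint function `F(x,w) = ½ xᵀAx + bᵀx + α`. -/
def Fq {n : ℕ} (w : QPParam n) (x : En n) : ℝ :=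
  (1 / 2) * (w.2.2.1.mulVec x ⬝ᵥ x) + w.2.2.2.1 ⬝ᵥ x + w.2.2.2.2

/-- The stationary (KKT) point set `S(w)` of `(QP_w)`. -/
def Sqp {n : ℕ} (w : QPParam n) : Set (En n) :=
  {x | Fq w x ≤ 0 ∧ ∃ μ : ℝ, 0 ≤ μ ∧
    w.1.mulVec x + w.2.1 + μ • (w.2.2.1.mulVec x + w.2.2.2.1) = (0 : Fin n → ℝ) ∧
    μ * Fq w x = 0}

/-- `S` is locally Lipschitz-like (has the Aubin property) around `(w0, x0)`:
there exist `ℓ > 0` and neighborhoods `U` of `x0`, `V` of `w0` such that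
`S(w') ∩ U ⊆ S(w) + ℓ‖w' - w‖ B̄` for all `w, w' ∈ V`. -/
def LipschitzLike {W X : Type*} [NormedAddCommGroup W] [NormedAddCommGroup X]
    (S : W → Set X) (w0 : W) (x0 : X) : Prop :=
  ∃ ℓ : ℝ, 0 < ℓ ∧ ∃ U ∈ nhds x0, ∃ V ∈ nhds w0,
    ∀ w ∈ V, ∀ w' ∈ V, ∀ x ∈ S w' ∩ U, ∃ y ∈ S w, ‖x - y‖ ≤ ℓ * ‖w' - w‖

attribute [local instance] Matrix.normedSpace

set_option maxHeartbeats 800000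

/-- Joint continuity of the constraint function. -/
lemma cont_Fq {n : ℕ} : Continuous (fun p : QPParam n × En n => Fq p.1 p.2) := by
  unfold Fq Matrix.mulVec dotProduct
  fun_prop

/-- A quantitative joint "strict feasibility" neighborhood. -/
lemma strict_nbhd {n : ℕ} {w0 : QPParam n} {x0 : En n} (hF : Fq w0 x0 < 0) :
    ∃ ε > 0, ∀ w : QPParam n, ∀ x : En n,
      dist w w0 < ε → dist x x0 < ε → Fq w x < 0 := by
  have h : {p : QPParam n × En n | Fq p.1 p.2 < 0} ∈ nhds (w0, x0) :=
    (isOpen_lt cont_Fq continuous_const).mem_nhds hF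
  rw [mem_nhds_prod_iff] at h
  obtain ⟨V, hV, U, hU, hsub⟩ := h
  obtain ⟨δ1, hδ1, hb1⟩ := Metric.mem_nhds_iff.1 hV
  obtain ⟨δ2, hδ2, hb2⟩ := Metric.mem_nhds_iff.1 hU
  refine ⟨min δ1 δ2, lt_min hδ1 hδ2, fun w x h1 h2 => ?_⟩
  have hw : w ∈ V := hb1 (Metric.mem_ball.2 (h1.trans_le (min_le_left _ _)))
  have hx : x ∈ U := hb2 (Metric.mem_ball.2 (h2.trans_le (min_le_right _ _)))
  have hm : (w, x) ∈ {p : QPParam n × En n | Fq p.1 p.2 < 0} :=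
    hsub (Set.mk_mem_prod hw hx)
  simpa only [Set.mem_setOf_eq] using hm

/-- Determinant of a matrix with `C¹` entries is `C¹`. -/
lemma contDiff_det_comp {n : ℕ} {E : Type*} [NormedAddCommGroup E] [NormedSpace ℝ E]
    {f : E → Matrix (Fin n) (Fin n) ℝ} (hf : ∀ i j, ContDiff ℝ 1 fun e => f e i j) :
    ContDiff ℝ 1 fun e => (f e).det := by
  simp_rw [Matrix.det_apply']
  exact ContDiff.sum fun σ _ => (contDiff_const.mul (contDiff_prod fun i _ => hf _ _))

lemma contDiff_entry1 {n : ℕ} (i j : Fin n) : ContDiff ℝ 1 fun w : QPParam n => w.1 i j :=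
  (contDiff_apply_apply ℝ ℝ i j).comp contDiff_fst

lemma contDiff_c1 {n : ℕ} (j : Fin n) : ContDiff ℝ 1 fun w : QPParam n => w.2.1 j :=
  (contDiff_apply ℝ ℝ j).comp (contDiff_fst.comp contDiff_snd)

lemma contDiff_adj {n : ℕ} (i j : Fin n) :
    ContDiff ℝ 1 fun w : QPParam n => (w.1.adjugate) i j := by
  simp_rw [Matrix.adjugate_apply]
  apply contDiff_det_comp
  intro a b
  by_cases h : a = j <;> simp [Matrix.updateRow_apply, h, contDiff_const, contDiff_entry1]

/-- The local single-valued solution map `w ↦ -(w.1)⁻¹ (w.2.1)`. -/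
def gsol {n : ℕ} (w : QPParam n) : En n := WithLp.toLp 2 ((w.1)⁻¹.mulVec (-w.2.1))

lemma contDiffAt_gsol {n : ℕ} {w0 : QPParam n} (h : w0.1.det ≠ 0) :
    ContDiffAt ℝ 1 gsol w0 := by
  have hg : ∀ w : QPParam n, gsol w
      = fun i => (w.1.det)⁻¹ * ∑ j, w.1.adjugate i j * (-w.2.1 j) := by
    intro w
    funext i
    show ((w.1)⁻¹.mulVec (-w.2.1)) i = _
    rw [Matrix.inv_def, Ring.inverse_eq_inv', Matrix.smul_mulVec]
    simp [Matrix.mulVec, dotProduct, Finset.mul_sum]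
  rw [contDiffAt_piLp]
  intro i
  simp only [hg]
  exact ((contDiff_det_comp contDiff_entry1).contDiffAt.inv h).mul
    (ContDiff.sum fun j _ => (contDiff_adj i j).mul (contDiff_c1 j).neg).contDiffAt

lemma gsol_eq {n : ℕ} {w : QPParam n} (h : w.1.det ≠ 0) :
    w.1.mulVec (gsol w) = -w.2.1 := by
  show w.1.mulVec ((w.1)⁻¹.mulVec (-w.2.1)) = -w.2.1
  rw [Matrix.mulVec_mulVec, Matrix.mul_nonsing_inv _ (isUnit_iff_ne_zero.2 h),
    Matrix.one_mulVec]

lemma gsol_unique {n : ℕ} {w : QPParam n} (h : w.1.det ≠ 0) {x : En n}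
    (hx : w.1.mulVec x + w.2.1 = 0) : x = gsol w := by
  have h1 : w.1.mulVec x = -w.2.1 := by rwa [add_eq_zero_iff_eq_neg] at hx
  show x = WithLp.toLp 2 ((w.1)⁻¹.mulVec (-w.2.1))
  rw [← h1, Matrix.mulVec_mulVec, Matrix.nonsing_inv_mul _ (isUnit_iff_ne_zero.2 h),
    Matrix.one_mulVec]

/-- For `(QP_w)` with `F(x0,w0) < 0` and `D x0 + c = 0`,
the stationary point set map `S` is locally Lipschitz-like around `(w0, x0)`
if and only if `det D ≠ 0`. -/
theorem stmt0 {n : ℕ} (hn : 1 ≤ n)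
    (D A : Matrix (Fin n) (Fin n) ℝ) (c b : Fin n → ℝ) (α : ℝ) (x0 : En n)
    (hD : D.IsSymm) (hA : A.IsSymm)
    (hF : Fq (D, c, A, b, α) x0 < 0)
    (hstat : D.mulVec x0 + c = 0) :
    LipschitzLike Sqp (D, c, A, b, α) x0 ↔ D.det ≠ 0 := by
  obtain ⟨ε, hε, key⟩ := strict_nbhd hF
  constructor
  · -- Lipschitz-like → det ≠ 0
    intro hLip hdet0
    obtain ⟨v, hv0, hDv⟩ := Matrix.exists_mulVec_eq_zero_iff.2 hdet0
    obtain ⟨ℓ, hℓ, U, hU, V, hV, hmain⟩ := hLip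
    obtain ⟨δ, hδ, hδV⟩ := Metric.mem_nhds_iff.1 hV
    have hvn : 0 < ‖v‖ := norm_pos_iff.2 hv0
    set t : ℝ := min (δ / (2 * ‖v‖)) (ε / (2 * ℓ * ‖v‖)) with htdef
    have ht : 0 < t := lt_min (by positivity) (by positivity)
    have hsub : ((D, c + t • v, A, b, α) : QPParam n) - (D, c, A, b, α)
        = (0, (t • v, (0, (0, 0)))) := by
      simp [Prod.ext_iff]
    have htv : (0:ℝ) ≤ t * ‖v‖ := by positivity
    have hnorm : ‖((D, c + t • v, A, b, α) : QPParam n) - (D, c, A, b, α)‖ ≤ t * ‖v‖ := by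
      rw [hsub]
      have h1 : ‖t • v‖ = t * ‖v‖ := by rw [norm_smul, Real.norm_of_nonneg ht.le]
      simp only [Prod.norm_def, norm_zero, h1]
      simp [max_le_iff, htv]
    have hw1V : ((D, c + t • v, A, b, α) : QPParam n) ∈ V := by
      apply hδV
      rw [Metric.mem_ball, dist_eq_norm]
      have h2 : t ≤ δ / (2 * ‖v‖) := min_le_left _ _
      have h3 : t * ‖v‖ ≤ δ / 2 := by
        calc t * ‖v‖ ≤ (δ / (2 * ‖v‖)) * ‖v‖ := mul_le_mul_of_nonneg_right h2 (norm_nonneg v)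
          _ = δ / 2 := by field_simp
      linarith [hnorm]
    have hw0V : ((D, c, A, b, α) : QPParam n) ∈ V := mem_of_mem_nhds hV
    have hx0U : x0 ∈ U := mem_of_mem_nhds hU
    have hx0S : x0 ∈ Sqp (D, c, A, b, α) := by
      refine ⟨hF.le, 0, le_rfl, ?_, by ring⟩
      show D.mulVec x0 + c + (0:ℝ) • _ = 0
      rw [zero_smul, add_zero]; exact hstat
    obtain ⟨y, hyS, hyd⟩ := hmain (D, c + t • v, A, b, α) hw1V (D, c, A, b, α) hw0V x0
      ⟨hx0S, hx0U⟩
    have hy : ‖x0 - y‖ ≤ ℓ * (t * ‖v‖) := by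
      refine hyd.trans ?_
      have hrev : ‖((D, c, A, b, α) : QPParam n) - (D, c + t • v, A, b, α)‖
          = ‖((D, c + t • v, A, b, α) : QPParam n) - (D, c, A, b, α)‖ := norm_sub_rev _ _
      rw [hrev]
      exact mul_le_mul_of_nonneg_left hnorm hℓ.le
    have hyx0 : dist y x0 < ε := by
      have h4 : t ≤ ε / (2 * ℓ * ‖v‖) := min_le_right _ _
      have h5 : ℓ * (t * ‖v‖) ≤ ε / 2 := by
        calc ℓ * (t * ‖v‖) ≤ ℓ * ((ε / (2 * ℓ * ‖v‖)) * ‖v‖) := by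
              refine mul_le_mul_of_nonneg_left ?_ hℓ.le
              exact mul_le_mul_of_nonneg_right h4 (norm_nonneg v)
          _ = ε / 2 := by field_simp
      rw [dist_eq_norm]
      calc ‖y - x0‖ = ‖x0 - y‖ := norm_sub_rev _ _
        _ ≤ ℓ * (t * ‖v‖) := hy
        _ < ε := by linarith
    have hFy : Fq (D, c + t • v, A, b, α) y < 0 := by
      have he : Fq ((D, c + t • v, A, b, α) : QPParam n) y = Fq (D, c, A, b, α) y := rfl
      rw [he]
      exact key _ y (by simpa [dist_self] using hε) hyx0
    obtain ⟨hFle, μ, hμ, heq, hcomp⟩ := hyS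
    have hμ0 : μ = 0 := (mul_eq_zero.1 hcomp).resolve_right (ne_of_lt hFy)
    rw [hμ0, zero_smul, add_zero] at heq
    have heq' : D.mulVec y + (c + t • v) = 0 := heq
    have hvD : Matrix.vecMul v D = 0 := by
      have h6 := Matrix.vecMul_transpose D v
      rw [hD.eq] at h6
      rw [h6, hDv]
    have hvc : v ⬝ᵥ c = 0 := by
      have hc : c = -(D.mulVec x0) := eq_neg_of_add_eq_zero_right hstat
      rw [hc, dotProduct_neg, Matrix.dotProduct_mulVec, hvD,
        zero_dotProduct, neg_zero]
    have hfin := congrArg (fun u : Fin n → ℝ => dotProduct v u) heq'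
    simp only [dotProduct_add, Matrix.dotProduct_mulVec, hvD,
      zero_dotProduct, dotProduct_zero, dotProduct_smul,
      smul_eq_mul, zero_add, hvc] at hfin
    have hvv : (0:ℝ) < v ⬝ᵥ v := by
      have h7 : (0:ℝ) ≤ v ⬝ᵥ v := Finset.sum_nonneg fun i _ => mul_self_nonneg _
      have h8 : v ⬝ᵥ v ≠ 0 := fun h => hv0 (dotProduct_self_eq_zero.1 h)
      exact lt_of_le_of_ne h7 (Ne.symm h8)
    nlinarith
  · -- det ≠ 0 → Lipschitz-like
    intro hdet
    obtain ⟨K, t, ht, hK⟩ :=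
      (contDiffAt_gsol (show ((D, c, A, b, α) : QPParam n).1.det ≠ 0 from hdet)).exists_lipschitzOnWith
    have hg0 : gsol ((D, c, A, b, α) : QPParam n) = x0 :=
      (gsol_unique hdet hstat).symm
    have hVg : gsol ⁻¹' Metric.ball x0 ε ∈ nhds ((D, c, A, b, α) : QPParam n) := by
      refine (contDiffAt_gsol hdet).continuousAt.preimage_mem_nhds ?_
      rw [hg0]
      exact Metric.ball_mem_nhds _ hε
    have hVdet : {w : QPParam n | w.1.det ≠ 0} ∈ nhds ((D, c, A, b, α) : QPParam n) := by
      have ho : IsOpen {w : QPParam n | w.1.det ≠ 0} :=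
        isOpen_ne_fun (contDiff_det_comp contDiff_entry1).continuous continuous_const
      exact ho.mem_nhds hdet
    refine ⟨(K : ℝ) + 1, by positivity, Metric.ball x0 ε, Metric.ball_mem_nhds _ hε,
      Metric.ball (D, c, A, b, α) ε ∩ ({w | w.1.det ≠ 0} ∩ (t ∩ gsol ⁻¹' Metric.ball x0 ε)),
      Filter.inter_mem (Metric.ball_mem_nhds _ hε) (Filter.inter_mem hVdet
        (Filter.inter_mem ht hVg)), ?_⟩
    rintro w ⟨hwb, hwdet, hwt, hwg⟩ w' ⟨hw'b, hw'det, hw't, hw'g⟩ x ⟨hxS, hxU⟩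
    obtain ⟨hFle', μ, hμ, heq, hcomp⟩ := hxS
    have hFx : Fq w' x < 0 := key w' x (Metric.mem_ball.1 hw'b) (Metric.mem_ball.1 hxU)
    have hμ0 : μ = 0 := (mul_eq_zero.1 hcomp).resolve_right (ne_of_lt hFx)
    rw [hμ0, zero_smul, add_zero] at heq
    have hx_eq : x = gsol w' := gsol_unique hw'det heq
    refine ⟨gsol w, ?_, ?_⟩
    · refine ⟨(key w (gsol w) (Metric.mem_ball.1 hwb) (Metric.mem_ball.1 hwg)).le,
        0, le_rfl, ?_, by ring⟩
      show w.1.mulVec (gsol w) + w.2.1 + (0:ℝ) • _ = 0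
      rw [zero_smul, add_zero, gsol_eq hwdet, neg_add_cancel]
    · have hd := hK.dist_le_mul w' hw't w hwt
      rw [dist_eq_norm, dist_eq_norm] at hd
      rw [hx_eq]
      calc ‖gsol w' - gsol w‖ ≤ (K : ℝ) * ‖w' - w‖ := hd
        _ ≤ ((K : ℝ) + 1) * ‖w' - w‖ := by
            have := norm_nonneg (w' - w); nlinarith
end
end

section
/- Let n ≥ 1 and let w̄=(D̄,c̄,Ā,b̄,ᾱ) be a parameter of (QP_w) with D̄, Ā real symmetric n×n matrices, c̄,b̄ ∈ ℝⁿ, ᾱ ∈ ℝ. Suppose x̄ ∈ ℝⁿ satisfies F(x̄,w̄) < 0 and D̄x̄ + c̄ = 0, and that det D̄ ≠ 0. Then the stationary point set map S has the Robinson stability at ω₀=(x̄,w̄,0). -/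
open Matrix

attribute [local instance] Matrix.normedAddCommGroup

noncomputable section

/-- The set `Φ(x,w) = {Dx + c + μ(Ax + b) : μ ≥ 0, μ·F(x,w) = 0}` when `F(x,w) ≤ 0`
(and `∅` otherwise). -/
def PhiQP {n : ℕ} (x : En n) (w : QPParam n) : Set (En n) :=
  {z | Fq w x ≤ 0 ∧ ∃ μ : ℝ, 0 ≤ μ ∧ μ * Fq w x = 0 ∧
    z = w.1.mulVec x + w.2.1 + μ • (w.2.2.1.mulVec x + w.2.2.2.1)}

/-- `S` has the Robinson stability at `ω₀ = (x0, w0, 0)`: there exist `r > 0`, `γ > 0`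
and neighborhoods `U` of `x0`, `V` of `w0` such that `d(x, S(w)) ≤ r · d(0, Φ(x,w))`
for all `(x,w) ∈ U × V` with `Φ(x,w) ≠ ∅` and `d(0, Φ(x,w)) < γ`. -/
def RobinsonStableQP {n : ℕ} (w0 : QPParam n) (x0 : En n) : Prop :=
  ∃ r : ℝ, 0 < r ∧ ∃ γ : ℝ, 0 < γ ∧ ∃ U ∈ nhds x0, ∃ V ∈ nhds w0,
    ∀ x ∈ U, ∀ w ∈ V, (PhiQP x w).Nonempty →
      Metric.infDist 0 (PhiQP x w) < γ →
      Metric.infDist x (Sqp w) ≤ r * Metric.infDist 0 (PhiQP x w)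

def Tclm {n : ℕ} (M : Matrix (Fin n) (Fin n) ℝ) : En n →L[ℝ] En n :=
  LinearMap.toContinuousLinearMap (Matrix.toEuclideanLin M)

lemma cont_Tclm {n : ℕ} : Continuous (fun M : Matrix (Fin n) (Fin n) ℝ => Tclm M) :=
  by have := LinearMap.continuous_of_finiteDimensional
      ((LinearMap.toContinuousLinearMap.toLinearMap).comp Matrix.toEuclideanLin.toLinearMap :
        Matrix (Fin n) (Fin n) ℝ →ₗ[ℝ] (En n →L[ℝ] En n))
     exact this

lemma Tclm_apply {n : ℕ} (M : Matrix (Fin n) (Fin n) ℝ) (v : En n) :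
    Tclm M v = (WithLp.equiv 2 (Fin n → ℝ)).symm (M.mulVec v) := rfl

lemma contFqPi {n : ℕ} : Continuous (fun p : QPParam n × (Fin n → ℝ) =>
    (1/2 : ℝ) * (p.1.2.2.1.mulVec p.2 ⬝ᵥ p.2) + p.1.2.2.2.1 ⬝ᵥ p.2 + p.1.2.2.2.2) := by
  have hA : Continuous fun p : QPParam n × (Fin n → ℝ) => p.1.2.2.1 := by fun_prop
  have hb : Continuous fun p : QPParam n × (Fin n → ℝ) => p.1.2.2.2.1 := by fun_prop
  have hal : Continuous fun p : QPParam n × (Fin n → ℝ) => p.1.2.2.2.2 := by fun_prop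
  have hx : Continuous fun p : QPParam n × (Fin n → ℝ) => p.2 := continuous_snd
  exact ((continuous_const.mul ((hA.matrix_mulVec hx).dotProduct hx)).add
    (hb.dotProduct hx)).add hal

lemma contFq {n : ℕ} : Continuous fun p : QPParam n × En n => Fq p.1 p.2 := by
  have he : Continuous fun p : QPParam n × En n =>
      (p.1, (WithLp.equiv 2 (Fin n → ℝ)) p.2) :=
    continuous_fst.prodMk ((PiLp.continuous_ofLp 2 (fun _ : Fin n => ℝ)).comp continuous_snd)
  have h2 := contFqPi.comp he
  refine h2.congr fun p => ?_
  simp only [Function.comp_apply, Fq]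
  rfl

set_option maxHeartbeats 1000000

lemma contMulVec {n : ℕ} : Continuous fun q : Matrix (Fin n) (Fin n) ℝ × (Fin n → ℝ) =>
    ((WithLp.equiv 2 (Fin n → ℝ)).symm (q.1.mulVec q.2) : En n) :=
  (PiLp.continuous_toLp 2 (fun _ : Fin n => ℝ)).comp
    (continuous_fst.matrix_mulVec continuous_snd)

lemma contDet {n : ℕ} : Continuous fun w : QPParam n => w.1.det :=
  continuous_id.matrix_det.comp continuous_fst

lemma contInvAt {n : ℕ} (w0 : QPParam n) (hdet : w0.1.det ≠ 0) :
    ContinuousAt (fun w : QPParam n => w.1⁻¹) w0 :=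
  (continuousAt_matrix_inv _ (NormedRing.inverse_continuousAt
    ((isUnit_iff_ne_zero.mpr hdet).unit))).comp continuous_fst.continuousAt

lemma contgAt {n : ℕ} (w0 : QPParam n) (hdet : w0.1.det ≠ 0) :
    ContinuousAt (fun w : QPParam n =>
      (-((WithLp.equiv 2 (Fin n → ℝ)).symm (w.1⁻¹.mulVec w.2.1)) : En n)) w0 := by
  have h : ContinuousAt (fun w : QPParam n =>
      ((WithLp.equiv 2 (Fin n → ℝ)).symm (w.1⁻¹.mulVec w.2.1) : En n)) w0 :=
    contMulVec.continuousAt.comp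
      ((contInvAt w0 hdet).prodMk (continuous_fst.comp continuous_snd).continuousAt)
  exact h.neg

lemma contTinvAt {n : ℕ} (w0 : QPParam n) (hdet : w0.1.det ≠ 0) :
    ContinuousAt (fun w : QPParam n => ‖Tclm (w.1⁻¹)‖) w0 :=
  (continuous_norm.comp cont_Tclm).continuousAt.comp (contInvAt w0 hdet)


lemma jointNbhd {n : ℕ} (w0 : QPParam n) (x0 : En n) (hF : Fq w0 x0 < 0) :
    ∃ V4 ∈ nhds w0, ∃ U ∈ nhds x0, ∀ x ∈ U, ∀ w ∈ V4, Fq w x < 0 := by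
  have hc1 : ContinuousAt (fun p : QPParam n × En n => Fq p.1 p.2) (w0, x0) :=
    contFq.continuousAt
  have hmem : {p : QPParam n × En n | Fq p.1 p.2 < 0} ∈ nhds (w0, x0) :=
    hc1.preimage_mem_nhds (Iio_mem_nhds hF)
  rw [mem_nhds_prod_iff] at hmem
  obtain ⟨V, hV, U, hU, h⟩ := hmem
  refine ⟨V, hV, U, hU, fun x hx w hw => ?_⟩
  have hm : (w, x) ∈ {p : QPParam n × En n | Fq p.1 p.2 < 0} := h (Set.mk_mem_prod hw hx)
  exact hm

/-- For `(QP_w)` with `F(x0,w0) < 0`, `D x0 + c = 0` and `det D ≠ 0`,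
the stationary point set map `S` has the Robinson stability at `ω₀ = (x0, w0, 0)`. -/
theorem stmt1 {n : ℕ} (hn : 1 ≤ n)
    (D A : Matrix (Fin n) (Fin n) ℝ) (c b : Fin n → ℝ) (α : ℝ) (x0 : En n)
    (hD : D.IsSymm) (hA : A.IsSymm)
    (hF : Fq (D, c, A, b, α) x0 < 0)
    (hstat : D.mulVec x0 + c = 0)
    (hdet : D.det ≠ 0) :
    RobinsonStableQP (D, c, A, b, α) x0 := by
  classical
  have hdet' : ((D, c, A, b, α) : QPParam n).1.det ≠ 0 := hdet
  set g : QPParam n → En n := fun w =>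
    (-((WithLp.equiv 2 (Fin n → ℝ)).symm (w.1⁻¹.mulVec w.2.1)) : En n) with hg
  have hgC : ContinuousAt g ((D, c, A, b, α) : QPParam n) := contgAt _ hdet'
  have hDu : IsUnit D.det := isUnit_iff_ne_zero.mpr hdet
  -- g w0 = x0
  have hgx0 : g (D, c, A, b, α) = x0 := by
    have h1 : D.mulVec x0 = -c := by
      funext i
      have := congrFun hstat i
      simpa [Pi.add_apply, Pi.neg_apply, eq_neg_iff_add_eq_zero] using this
    have h2 : D⁻¹.mulVec (D.mulVec x0) = x0 := by
      rw [Matrix.mulVec_mulVec, Matrix.nonsing_inv_mul D hDu, Matrix.one_mulVec]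
    have h3 : -(D⁻¹.mulVec c) = (x0 : Fin n → ℝ) := by
      rw [← h2, h1, Matrix.mulVec_neg]
    ext i
    exact congrFun h3 i
  -- constants
  set r : ℝ := ‖Tclm (D⁻¹)‖ + 1 with hr
  have hrpos : 0 < r := by
    have h := norm_nonneg (Tclm (D⁻¹))
    rw [hr]; linarith
  -- neighborhoods
  have hcdet : ContinuousAt (fun w : QPParam n => w.1.det) ((D, c, A, b, α) : QPParam n) :=
    contDet.continuousAt
  have hV1 : {w : QPParam n | w.1.det ≠ 0} ∈ nhds ((D, c, A, b, α) : QPParam n) :=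
    hcdet.preimage_mem_nhds (compl_singleton_mem_nhds hdet)
  have hV2 : {w : QPParam n | ‖Tclm (w.1⁻¹)‖ < r} ∈ nhds ((D, c, A, b, α) : QPParam n) := by
    have hct : ContinuousAt (fun w : QPParam n => ‖Tclm (w.1⁻¹)‖)
        ((D, c, A, b, α) : QPParam n) := contTinvAt _ hdet'
    refine hct.preimage_mem_nhds (Iio_mem_nhds ?_)
    rw [hr]
    exact lt_add_of_pos_right _ one_pos
  obtain ⟨V4, hV4, U, hU, hUV⟩ :
      ∃ V4 ∈ nhds ((D, c, A, b, α) : QPParam n), ∃ U ∈ nhds x0,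
        ∀ x ∈ U, ∀ w ∈ V4, Fq w x < 0 := jointNbhd _ _ hF
  have hV3 : g ⁻¹' U ∈ nhds ((D, c, A, b, α) : QPParam n) := by
    apply hgC.preimage_mem_nhds
    rw [hgx0]; exact hU
  refine ⟨r, hrpos, 1, one_pos, U, hU, _, Filter.inter_mem (Filter.inter_mem hV1 hV2)
    (Filter.inter_mem hV3 hV4), ?_⟩
  rintro x hx w ⟨⟨hw1, hw2⟩, hw3, hw4⟩ - -
  have hwu : IsUnit w.1.det := isUnit_iff_ne_zero.mpr hw1
  have hFx : Fq w x < 0 := hUV x hx w hw4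
  -- Phi is a singleton
  set h0 : En n := (WithLp.equiv 2 (Fin n → ℝ)).symm (w.1.mulVec x + w.2.1) with hh0
  have hPhi : PhiQP x w = {h0} := by
    ext z
    constructor
    · rintro ⟨-, μ, hμ0, hμF, hz'⟩
      have hz : μ = 0 := by
        rcases mul_eq_zero.mp hμF with h | h
        · exact h
        · exact absurd h (ne_of_lt hFx)
      subst hz
      show (_ : En n) ∈ ({h0} : Set (En n))
      rw [Set.mem_singleton_iff, hh0]
      ext i
      simp [hz']
    · rintro rfl
      refine ⟨le_of_lt hFx, 0, le_refl 0, by simp, ?_⟩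
      rw [hh0]
      funext i
      simp
  -- g w ∈ Sqp w
  have hgS : g w ∈ Sqp w := by
    refine ⟨le_of_lt (hUV (g w) (hw3) w hw4), 0, le_refl 0, ?_, by simp⟩
    have hz : w.1.mulVec (-(w.1⁻¹.mulVec w.2.1)) + w.2.1 = 0 := by
      rw [Matrix.mulVec_neg, Matrix.mulVec_mulVec, Matrix.mul_nonsing_inv _ hwu,
        Matrix.one_mulVec]
      simp
    funext i
    have := congrFun hz i
    simpa [hg] using this
  -- the key identity
  have h2 : w.1⁻¹.mulVec (w.1.mulVec x + w.2.1)
      = WithLp.equiv 2 (Fin n → ℝ) x + w.1⁻¹.mulVec w.2.1 := by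
    rw [Matrix.mulVec_add, Matrix.mulVec_mulVec, Matrix.nonsing_inv_mul _ hwu,
      Matrix.one_mulVec]
    rfl
  have hkey : x - g w = Tclm (w.1⁻¹) h0 := by
    have h3 : Tclm (w.1⁻¹) h0 = (WithLp.equiv 2 (Fin n → ℝ)).symm
        (WithLp.equiv 2 (Fin n → ℝ) x + w.1⁻¹.mulVec w.2.1) := by
      rw [Tclm_apply, hh0]
      show (WithLp.equiv 2 (Fin n → ℝ)).symm (w.1⁻¹.mulVec (w.1.mulVec x + w.2.1)) = _
      rw [h2]
    rw [h3, hg]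
    rw [sub_neg_eq_add]
    rfl
  calc Metric.infDist x (Sqp w) ≤ dist x (g w) := Metric.infDist_le_dist_of_mem hgS
    _ = ‖x - g w‖ := dist_eq_norm x (g w)
    _ = ‖Tclm (w.1⁻¹) h0‖ := by rw [hkey]
    _ ≤ ‖Tclm (w.1⁻¹)‖ * ‖h0‖ := (Tclm (w.1⁻¹)).le_opNorm h0
    _ ≤ r * ‖h0‖ := mul_le_mul_of_nonneg_right (le_of_lt hw2) (norm_nonneg _)
    _ = r * Metric.infDist 0 (PhiQP x w) := by
        rw [hPhi, Metric.infDist_singleton, dist_zero_left]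
end
end

section
/- Let n ≥ 1 and let w̄=(D̄,c̄,Ā,b̄,ᾱ) be a parameter of (QP_w) with D̄, Ā real symmetric n×n matrices, c̄,b̄ ∈ ℝⁿ, ᾱ ∈ ℝ. Suppose x̄ ∈ ℝⁿ satisfies F(x̄,w̄) = 0, Āx̄+b̄ ≠ 0, and D̄x̄+c̄ = 0 (so x̄ ∈ S(w̄) and the unique Lagrange multiplier corresponding to x̄ is λ = 0). If S is locally Lipschitz-like around (w̄,x̄), then for all v ∈ ℝⁿ and γ ∈ ℝ: D̄v + γ(Āx̄+b̄) = 0, (Āx̄+b̄)ᵀv ≥ 0 and γ ≥ 0 together imply v = 0 and γ = 0. -/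
open Matrix

attribute [local instance] Matrix.normedAddCommGroup

noncomputable section

section Helpers
open scoped RealInnerProductSpace

def toE {n : ℕ} (u : Fin n → ℝ) : En n := WithLp.toLp 2 u

@[simp] lemma toE_apply {n : ℕ} (u : Fin n → ℝ) (i : Fin n) : toE u i = u i := rfl

lemma dp_inner {n : ℕ} (a b : Fin n → ℝ) : a ⬝ᵥ b = ⟪toE a, toE b⟫ := by
  simp [dotProduct, PiLp.inner_apply, RCLike.inner_apply, conj_trivial, mul_comm]

lemma dp_cs {n : ℕ} (a b : Fin n → ℝ) : |a ⬝ᵥ b| ≤ ‖toE a‖ * ‖toE b‖ := by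
  rw [dp_inner]; exact abs_real_inner_le_norm _ _

lemma dp_self {n : ℕ} (a : Fin n → ℝ) : a ⬝ᵥ a = ‖toE a‖ ^ 2 := by
  rw [dp_inner, real_inner_self_eq_norm_sq]

lemma opbd {n : ℕ} (M : Matrix (Fin n) (Fin n) ℝ) :
    ∃ C : ℝ, 0 ≤ C ∧ ∀ z : Fin n → ℝ, ‖toE (M.mulVec z)‖ ≤ C * ‖toE z‖ := by
  let L := LinearMap.toContinuousLinearMap (Matrix.toEuclideanLin M)
  refine ⟨max ‖L‖ 0, le_max_right _ _, fun z => ?_⟩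
  have h1 : toE (M.mulVec z) = L (toE z) := rfl
  rw [h1]
  calc ‖L (toE z)‖ ≤ ‖L‖ * ‖toE z‖ := L.le_opNorm _
    _ ≤ max ‖L‖ 0 * ‖toE z‖ := by gcongr; exact le_max_left _ _

lemma symm_dot {n : ℕ} {M : Matrix (Fin n) (Fin n) ℝ} (hM : M.IsSymm) (a b : Fin n → ℝ) :
    a ⬝ᵥ M.mulVec b = M.mulVec a ⬝ᵥ b := by
  rw [Matrix.dotProduct_mulVec, ← Matrix.mulVec_transpose, hM.eq]

end Helpers

set_option maxHeartbeats 1000000 in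
/-- For `(QP_w)` with `F(x0,w0) = 0`, `A x0 + b ≠ 0` and Lagrange
multiplier `λ = 0` (i.e. `D x0 + c = 0`): if `S` is locally Lipschitz-like around
`(w0, x0)`, then `Dv + γ(Ax0+b) = 0`, `(Ax0+b)ᵀv ≥ 0` and `γ ≥ 0` imply `v = 0`, `γ = 0`. -/
theorem stmt4 {n : ℕ} (hn : 1 ≤ n)
    (D A : Matrix (Fin n) (Fin n) ℝ) (c b : Fin n → ℝ) (α : ℝ) (x0 : En n)
    (hD : D.IsSymm) (hA : A.IsSymm)
    (hF : Fq (D, c, A, b, α) x0 = 0)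
    (hb : A.mulVec x0 + b ≠ 0)
    (hstat : D.mulVec x0 + c = 0)
    (hLip : LipschitzLike Sqp (D, c, A, b, α) x0) :
    ∀ v : Fin n → ℝ, ∀ γ : ℝ,
      D.mulVec v + γ • (A.mulVec x0 + b) = 0 →
      0 ≤ (A.mulVec x0 + b) ⬝ᵥ v → 0 ≤ γ → v = 0 ∧ γ = 0 := by
  intro v γ hv hσ hγ0
  obtain ⟨ℓ, hℓ, U, hU, V, hV, hAub⟩ := hLip
  set g : Fin n → ℝ := A.mulVec x0 + b with hg
  obtain ⟨Ca, hCa0, hCa⟩ := opbd A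
  obtain ⟨Cd, hCd0, hCd⟩ := opbd D
  obtain ⟨εV, hεV, hballV⟩ := Metric.mem_nhds_iff.mp hV
  have hgE : toE g ≠ 0 := fun h => hb (by simpa [toE] using congrArg WithLp.ofLp h)
  have hNg : 0 < ‖toE g‖ := norm_pos_iff.mpr hgE
  set Ng : ℝ := ‖toE g‖ with hNgdef
  set Ke : ℝ := ‖toE v‖ with hKedef
  have hKe0' : 0 ≤ Ke := norm_nonneg _
  set K : ℝ := ‖v‖ + γ with hKdef
  have hK0 : 0 ≤ K := by rw [hKdef]; positivity
  have hlK : 0 ≤ ℓ * K := mul_nonneg hℓ.le hK0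
  set Cstar : ℝ := (2 * Cd / Ng * (Ke * Ca) + γ * Ca / 2) * (ℓ * K * (ℓ * K)) with hCstardef
  have hCstar0 : 0 ≤ Cstar := by
    rw [hCstardef]
    have h1 : 0 ≤ 2 * Cd / Ng * (Ke * Ca) :=
      mul_nonneg (div_nonneg (by linarith only [hCd0]) hNg.le) (mul_nonneg hKe0' hCa0)
    have h2 : 0 ≤ γ * Ca / 2 := by positivity
    exact mul_nonneg (by linarith only [h1, h2]) (mul_self_nonneg (ℓ * K))
  set η₀ : ℝ := min (εV / (2 * (K + 1))) (Ng / ((2 * Ca + 2) * (ℓ * K + 1))) with hη₀def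
  have hd1 : (0:ℝ) < 2 * (K + 1) := by linarith
  have hd2 : (0:ℝ) < (2 * Ca + 2) * (ℓ * K + 1) :=
    mul_pos (by linarith only [hCa0]) (by linarith only [hlK])
  have hη₀pos : 0 < η₀ := lt_min (div_pos hεV hd1) (div_pos hNg hd2)
  -- membership of x0 in S(w0)
  have hx0S : x0 ∈ Sqp ((D, c, A, b, α) : QPParam n) := by
    refine ⟨le_of_eq hF, 0, le_rfl, ?_, by simp⟩
    simpa using hstat
  have hx0U : x0 ∈ U := mem_of_mem_nhds hU
  have hw0V : ((D, c, A, b, α) : QPParam n) ∈ V := mem_of_mem_nhds hV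
  have key : ∀ η : ℝ, 0 < η → η ≤ η₀ → Ke ^ 2 + γ ^ 2 ≤ Cstar * η := by
    intro η hη hηle
    -- norm of parameter perturbation
    have hwnorm : ‖((D, c, A, b, α) : QPParam n) - (D, c + η • v, A, b, α + η * γ)‖ ≤ η * K := by
      rw [Prod.mk_sub_mk, Prod.mk_sub_mk, Prod.mk_sub_mk, Prod.mk_sub_mk]
      simp only [sub_self, sub_add_cancel_left]
      simp only [Prod.norm_def, norm_zero, norm_neg]
      have h1 : ‖η • v‖ = η * ‖v‖ := by
        rw [norm_smul, Real.norm_eq_abs, abs_of_pos hη]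
      have h2 : ‖η * γ‖ = η * γ := by
        rw [Real.norm_eq_abs, abs_of_nonneg (mul_nonneg hη.le hγ0)]
      rw [h1, h2]
      have hηK : 0 ≤ η * K := mul_nonneg hη.le hK0
      apply max_le hηK
      apply max_le
      · rw [hKdef]
        exact mul_le_mul_of_nonneg_left (by linarith only [hγ0]) hη.le
      apply max_le hηK
      apply max_le hηK
      · rw [hKdef]
        exact mul_le_mul_of_nonneg_left (by linarith only [norm_nonneg v]) hη.le
    have hwηV : ((D, c + η • v, A, b, α + η * γ) : QPParam n) ∈ V := by
      apply hballV
      rw [Metric.mem_ball, dist_eq_norm]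
      have h1 : ‖((D, c + η • v, A, b, α + η * γ) : QPParam n) - (D, c, A, b, α)‖
          = ‖((D, c, A, b, α) : QPParam n) - (D, c + η • v, A, b, α + η * γ)‖ :=
        norm_sub_rev _ _
      rw [h1]
      have h2 : η ≤ εV / (2 * (K + 1)) := le_trans hηle (min_le_left _ _)
      rw [le_div_iff₀ hd1] at h2
      calc ‖((D, c, A, b, α) : QPParam n) - (D, c + η • v, A, b, α + η * γ)‖
          ≤ η * K := hwnorm
        _ < εV := by
            have h3 : η * K < η * (2 * (K + 1)) :=
              mul_lt_mul_of_pos_left (by linarith only [hK0]) hη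
            linarith only [h2, h3]
    obtain ⟨y, hyS, hyd⟩ := hAub (D, c + η • v, A, b, α + η * γ) hwηV (D, c, A, b, α) hw0V
      x0 ⟨hx0S, hx0U⟩
    obtain ⟨hfeas, μ, hμ0, hstat2, -⟩ := hyS
    have hstat2' : D.mulVec y + (c + η • v) + μ • (A.mulVec y + b) = 0 := hstat2
    have hfeasS : 1 / 2 * (A.mulVec y ⬝ᵥ y) + b ⬝ᵥ y + (α + η * γ) ≤ 0 := hfeas
    set zf : Fin n → ℝ := y - x0 with hzf
    set Nz : ℝ := ‖toE zf‖ with hNzdef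
    have hNz0 : 0 ≤ Nz := norm_nonneg _
    -- distance bound
    have hNzb : Nz ≤ ℓ * K * η := by
      have h1 : toE zf = y - x0 := by rw [hzf]; simp [toE]
      have h2 : Nz = ‖x0 - y‖ := by rw [hNzdef, h1, norm_sub_rev]
      have h3 : ℓ * ‖((D, c, A, b, α) : QPParam n) - (D, c + η • v, A, b, α + η * γ)‖
          ≤ ℓ * (η * K) := mul_le_mul_of_nonneg_left hwnorm hℓ.le
      rw [h2]
      calc ‖x0 - y‖ ≤ ℓ * ‖((D, c, A, b, α) : QPParam n)
            - (D, c + η • v, A, b, α + η * γ)‖ := hyd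
        _ ≤ ℓ * (η * K) := h3
        _ = ℓ * K * η := by ring
    -- scalar stationarity relations
    have hdot : ∀ u : Fin n → ℝ,
        u ⬝ᵥ D.mulVec zf + η * (u ⬝ᵥ v) + μ * (u ⬝ᵥ g) + μ * (u ⬝ᵥ A.mulVec zf) = 0 := by
      intro u
      have h := congrArg (fun t => u ⬝ᵥ t) hstat2'
      simp only [dotProduct_add, dotProduct_smul, smul_eq_mul,
        dotProduct_zero] at h
      have h2 : u ⬝ᵥ D.mulVec zf = u ⬝ᵥ D.mulVec y - u ⬝ᵥ D.mulVec x0 := by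
        rw [hzf, Matrix.mulVec_sub, dotProduct_sub]
      have h3 : u ⬝ᵥ A.mulVec zf = u ⬝ᵥ A.mulVec y - u ⬝ᵥ A.mulVec x0 := by
        rw [hzf, Matrix.mulVec_sub, dotProduct_sub]
      have h4 : u ⬝ᵥ D.mulVec x0 + u ⬝ᵥ c = 0 := by
        have h4' := congrArg (fun t => u ⬝ᵥ t) hstat
        simpa only [dotProduct_add, dotProduct_zero] using h4'
      have h5 : u ⬝ᵥ g = u ⬝ᵥ A.mulVec x0 + u ⬝ᵥ b := by
        rw [hg, dotProduct_add]
      linear_combination h + h2 + μ * h3 - h4 + μ * h5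
    -- feasibility scalar relation
    have hF0 : 1 / 2 * (A.mulVec x0 ⬝ᵥ x0) + b ⬝ᵥ x0 + α = 0 := hF
    have hfs : g ⬝ᵥ zf + 1 / 2 * (A.mulVec zf ⬝ᵥ zf) + η * γ ≤ 0 := by
      have hAy : A.mulVec y = A.mulVec x0 + A.mulVec zf := by
        rw [hzf, Matrix.mulVec_sub]; abel
      have hyd2 : ∀ t : Fin n → ℝ, t ⬝ᵥ y = t ⬝ᵥ x0 + t ⬝ᵥ zf := by
        intro t; rw [hzf, dotProduct_sub]; ring
      have hsym : A.mulVec zf ⬝ᵥ x0 = A.mulVec x0 ⬝ᵥ zf := by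
        rw [dotProduct_comm]; exact symm_dot hA x0 zf
      have hgz : g ⬝ᵥ zf = A.mulVec x0 ⬝ᵥ zf + b ⬝ᵥ zf := by
        rw [hg, add_dotProduct]
      have expand : 1 / 2 * (A.mulVec y ⬝ᵥ y) + b ⬝ᵥ y + (α + η * γ)
          = (1 / 2 * (A.mulVec x0 ⬝ᵥ x0) + b ⬝ᵥ x0 + α)
            + (g ⬝ᵥ zf + 1 / 2 * (A.mulVec zf ⬝ᵥ zf) + η * γ) := by
        rw [hAy, add_dotProduct, hyd2 (A.mulVec x0), hyd2 (A.mulVec zf), hyd2 b,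
          hsym, hgz]
        ring
      rw [expand, hF0] at hfeasS
      linarith only [hfeasS]
    -- bound on the multiplier μ
    have hgg : g ⬝ᵥ g = Ng ^ 2 := by rw [hNgdef]; exact dp_self g
    have e1 : |g ⬝ᵥ D.mulVec zf| ≤ Ng * (Cd * Nz) := by
      calc |g ⬝ᵥ D.mulVec zf| ≤ ‖toE g‖ * ‖toE (D.mulVec zf)‖ := dp_cs _ _
        _ ≤ Ng * (Cd * Nz) := by
            rw [← hNgdef]
            exact mul_le_mul_of_nonneg_left (by rw [hNzdef]; exact hCd zf) hNg.le
    have e2 : |g ⬝ᵥ A.mulVec zf| ≤ Ng * (Ca * Nz) := by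
      calc |g ⬝ᵥ A.mulVec zf| ≤ ‖toE g‖ * ‖toE (A.mulVec zf)‖ := dp_cs _ _
        _ ≤ Ng * (Ca * Nz) := by
            rw [← hNgdef]
            exact mul_le_mul_of_nonneg_left (by rw [hNzdef]; exact hCa zf) hNg.le
    have hCaNz : Ca * Nz ≤ Ng / 2 := by
      have h2 : η ≤ Ng / ((2 * Ca + 2) * (ℓ * K + 1)) := le_trans hηle (min_le_right _ _)
      rw [le_div_iff₀ hd2] at h2
      have h3 : Ca * Nz ≤ Ca * (ℓ * K * η) := mul_le_mul_of_nonneg_left hNzb hCa0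
      have p1 : 0 ≤ η * Ca := mul_nonneg hη.le hCa0
      have p2 : 0 ≤ η * (ℓ * K) := mul_nonneg hη.le hlK
      linarith only [h2, h3, p1, p2, hη.le]
    have t1 : μ * (Ng ^ 2 + g ⬝ᵥ A.mulVec zf) = -(g ⬝ᵥ D.mulVec zf) - η * (g ⬝ᵥ v) := by
      linear_combination hdot g - μ * hgg
    have hp4 : μ * (-(g ⬝ᵥ A.mulVec zf)) ≤ μ * (Ng * (Ca * Nz)) :=
      mul_le_mul_of_nonneg_left (by linarith only [(abs_le.mp e2).1]) hμ0
    have hp5 : μ * (Ng * (Ca * Nz)) ≤ μ * (Ng * (Ng / 2)) :=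
      mul_le_mul_of_nonneg_left (mul_le_mul_of_nonneg_left hCaNz hNg.le) hμ0
    have hDb : -(g ⬝ᵥ D.mulVec zf) - η * (g ⬝ᵥ v) ≤ Ng * (Cd * Nz) := by
      have h1 := (abs_le.mp e1).1
      have hησ : 0 ≤ η * (g ⬝ᵥ v) := mul_nonneg hη.le hσ
      linarith only [h1, hησ]
    have t3 : (μ * Ng) * Ng ≤ (2 * (Cd * Nz)) * Ng := by
      linarith only [t1, hp4, hp5, hDb]
    have hμb : μ * Ng ≤ 2 * (Cd * Nz) := le_of_mul_le_mul_right t3 hNg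
    have hμdiv : μ ≤ 2 * Cd * Nz / Ng := by
      rw [le_div_iff₀ hNg]; linarith only [hμb]
    -- v-direction relation
    have hDv : D.mulVec v = -(γ • g) := eq_neg_of_add_eq_zero_left hv
    have I1 : v ⬝ᵥ D.mulVec zf = -(γ * (g ⬝ᵥ zf)) := by
      rw [symm_dot hD v zf, hDv, neg_dotProduct, smul_dotProduct, smul_eq_mul]
    have hvv : v ⬝ᵥ v = Ke ^ 2 := by rw [hKedef]; exact dp_self v
    have eS1 : η * Ke ^ 2 = γ * (g ⬝ᵥ zf) - μ * (g ⬝ᵥ v) - μ * (v ⬝ᵥ A.mulVec zf) := by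
      have h := hdot v
      rw [I1, dotProduct_comm v g, hvv] at h
      linarith only [h]
    have eF : γ * (g ⬝ᵥ zf) ≤ -(η * γ ^ 2) - γ * (1 / 2 * (A.mulVec zf ⬝ᵥ zf)) := by
      have h := mul_le_mul_of_nonneg_left hfs hγ0
      rw [mul_zero] at h
      linarith only [h]
    have eB1 : |v ⬝ᵥ A.mulVec zf| ≤ Ke * (Ca * Nz) := by
      calc |v ⬝ᵥ A.mulVec zf| ≤ ‖toE v‖ * ‖toE (A.mulVec zf)‖ := dp_cs _ _
        _ ≤ Ke * (Ca * Nz) := by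
            rw [← hKedef]
            exact mul_le_mul_of_nonneg_left (by rw [hNzdef]; exact hCa zf) hKe0'
    have eB2 : |A.mulVec zf ⬝ᵥ zf| ≤ Ca * Nz * Nz := by
      calc |A.mulVec zf ⬝ᵥ zf| ≤ ‖toE (A.mulVec zf)‖ * ‖toE zf‖ := dp_cs _ _
        _ ≤ Ca * Nz * Nz := by
            rw [← hNzdef]
            exact mul_le_mul_of_nonneg_right (by rw [hNzdef]; exact hCa zf) (norm_nonneg _)
    have hp1 : -(γ * (1 / 2 * (A.mulVec zf ⬝ᵥ zf))) ≤ γ * (1 / 2 * (Ca * Nz * Nz)) := by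
      have h1 : -(A.mulVec zf ⬝ᵥ zf) ≤ Ca * Nz * Nz := by linarith only [(abs_le.mp eB2).1]
      have h2 := mul_le_mul_of_nonneg_left h1 hγ0
      linarith only [h2]
    have hp2 : -(μ * (v ⬝ᵥ A.mulVec zf)) ≤ μ * (Ke * (Ca * Nz)) := by
      have h1 : -(v ⬝ᵥ A.mulVec zf) ≤ Ke * (Ca * Nz) := by linarith only [(abs_le.mp eB1).1]
      have h2 := mul_le_mul_of_nonneg_left h1 hμ0
      linarith only [h2]
    have hp3 : 0 ≤ μ * (g ⬝ᵥ v) := mul_nonneg hμ0 hσ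
    have hbig : η * (Ke ^ 2 + γ ^ 2) ≤ μ * (Ke * (Ca * Nz)) + γ * (1 / 2 * (Ca * Nz * Nz)) := by
      linarith only [eS1, eF, hp1, hp2, hp3]
    have hμKe : μ * (Ke * (Ca * Nz)) ≤ 2 * Cd * Nz / Ng * (Ke * (Ca * Nz)) :=
      mul_le_mul_of_nonneg_right hμdiv (mul_nonneg hKe0' (mul_nonneg hCa0 hNz0))
    have hNN : Nz * Nz ≤ (ℓ * K * η) * (ℓ * K * η) := mul_self_le_mul_self hNz0 hNzb
    have hfin : η * (Ke ^ 2 + γ ^ 2) ≤ Cstar * (η * η) := by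
      have h1 : 2 * Cd * Nz / Ng * (Ke * (Ca * Nz)) + γ * (1 / 2 * (Ca * Nz * Nz))
          = (2 * Cd / Ng * (Ke * Ca) + γ * Ca / 2) * (Nz * Nz) := by ring
      have hcoef : 0 ≤ 2 * Cd / Ng * (Ke * Ca) + γ * Ca / 2 := by
        have := mul_nonneg (div_nonneg (by linarith : (0:ℝ) ≤ 2 * Cd) hNg.le)
          (mul_nonneg hKe0' hCa0)
        positivity
      have h2 : (2 * Cd / Ng * (Ke * Ca) + γ * Ca / 2) * (Nz * Nz)
          ≤ (2 * Cd / Ng * (Ke * Ca) + γ * Ca / 2) * ((ℓ * K * η) * (ℓ * K * η)) :=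
        mul_le_mul_of_nonneg_left hNN hcoef
      have h3 : (2 * Cd / Ng * (Ke * Ca) + γ * Ca / 2) * ((ℓ * K * η) * (ℓ * K * η))
          = Cstar * (η * η) := by rw [hCstardef]; ring
      linarith only [hbig, hμKe, h1, h2, h3]
    have h' : (Ke ^ 2 + γ ^ 2) * η ≤ (Cstar * η) * η := by linarith only [hfin]
    exact le_of_mul_le_mul_right h' hη
  -- conclude
  have hQ : Ke ^ 2 + γ ^ 2 ≤ 0 := by
    by_contra hc
    push_neg at hc
    have hη' : 0 < min η₀ ((Ke ^ 2 + γ ^ 2) / (2 * (Cstar + 1))) :=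
      lt_min hη₀pos (div_pos hc (by linarith))
    have h1 := key _ hη' (min_le_left _ _)
    have h2 : Cstar * min η₀ ((Ke ^ 2 + γ ^ 2) / (2 * (Cstar + 1)))
        ≤ Cstar * ((Ke ^ 2 + γ ^ 2) / (2 * (Cstar + 1))) :=
      mul_le_mul_of_nonneg_left (min_le_right _ _) hCstar0
    have h3 : Cstar * ((Ke ^ 2 + γ ^ 2) / (2 * (Cstar + 1))) < Ke ^ 2 + γ ^ 2 := by
      have hr : Cstar / (2 * (Cstar + 1)) < 1 :=
        (div_lt_one (by linarith)).mpr (by linarith)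
      have he : Cstar * ((Ke ^ 2 + γ ^ 2) / (2 * (Cstar + 1)))
          = (Ke ^ 2 + γ ^ 2) * (Cstar / (2 * (Cstar + 1))) := by ring
      rw [he]
      exact mul_lt_of_lt_one_right hc hr
    linarith only [h1, h2, h3]
  have hKesq : Ke ^ 2 = 0 :=
    le_antisymm (by linarith only [hQ, sq_nonneg γ]) (sq_nonneg Ke)
  have hγsq : γ ^ 2 = 0 :=
    le_antisymm (by linarith only [hQ, sq_nonneg Ke]) (sq_nonneg γ)
  have hKe0 : Ke = 0 := sq_eq_zero_iff.mp hKesq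
  have hγ : γ = 0 := sq_eq_zero_iff.mp hγsq
  refine ⟨?_, hγ⟩
  have hvE : toE v = 0 := by
    rw [← norm_eq_zero]; rw [hKedef] at hKe0; exact hKe0
  exact (by simpa [toE] using congrArg WithLp.ofLp hvE)
end
end

section
/- Let n ≥ 1 and let w̄=(D̄,c̄,Ā,b̄,ᾱ) be a parameter of (QP_w) with D̄, Ā real symmetric n×n matrices, c̄,b̄ ∈ ℝⁿ, ᾱ ∈ ℝ. Suppose x̄ ∈ ℝⁿ satisfies F(x̄,w̄) = 0, Āx̄+b̄ ≠ 0, and D̄x̄+c̄ = 0 (Lagrange multiplier λ = 0). Assume: (i) the (n+1)×(n+1) matrix [[D̄, Āx̄+b̄],[(Āx̄+b̄)ᵀ, 0]] has nonzero determinant; (ii) for all v ∈ ℝⁿ, γ ∈ ℝ, if D̄v + γ(Āx̄+b̄) = 0 and γ ≥ 0 then (Āx̄+b̄)ᵀv ≤ 0; (iii) for all v ∈ ℝⁿ, D̄v = 0 implies (Āx̄+b̄)ᵀv = 0. Then S is locally Lipschitz-like around (w̄,x̄). -/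
open Matrix

attribute [local instance] Matrix.normedAddCommGroup

noncomputable section

/-- The `(n+1)×(n+1)` block matrix `[[M, u], [uᵀ, 0]]`. -/
def blockMat {n : ℕ} (M : Matrix (Fin n) (Fin n) ℝ) (u : Fin n → ℝ) :
    Matrix (Fin n ⊕ Unit) (Fin n ⊕ Unit) ℝ :=
  Matrix.fromBlocks M (Matrix.of fun i (_ : Unit) => u i)
    (Matrix.of fun (_ : Unit) j => u j) 0
/-! ### Auxiliary material -/

attribute [local instance] Matrix.normedSpace

namespace Stmt5Aux

/-- The matrix `D + μ A` of the parametrized KKT system. -/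
def Mw {n : ℕ} (p : QPParam n × ℝ) : Matrix (Fin n) (Fin n) ℝ :=
  p.1.1 + p.2 • p.1.2.2.1

/-- The vector `c + μ b` of the parametrized KKT system. -/
def vw {n : ℕ} (p : QPParam n × ℝ) : Fin n → ℝ :=
  p.1.2.1 + p.2 • p.1.2.2.2.1

/-- The candidate stationary point `-(D + μA)⁻¹ (c + μ b)`. -/
def G {n : ℕ} (p : QPParam n × ℝ) : Fin n → ℝ :=
  -((Mw p)⁻¹ *ᵥ vw p)

/-- The value of the constraint along `G`. -/
def Psi {n : ℕ} (p : QPParam n × ℝ) : ℝ := Fq p.1 (WithLp.toLp 2 (G p))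

/-- The "slope" quantity controlling the decrease of `Psi` in `μ`. -/
def Qf {n : ℕ} (r : QPParam n × ℝ × ℝ) : ℝ :=
  (1/2) * (r.1.2.2.1 *ᵥ ((Mw (r.1, r.2.2))⁻¹ *ᵥ (r.1.2.2.1 *ᵥ G (r.1, r.2.1) + r.1.2.2.2.1))
      ⬝ᵥ G (r.1, r.2.2))
  + (1/2) * (r.1.2.2.1 *ᵥ G (r.1, r.2.1)
      ⬝ᵥ ((Mw (r.1, r.2.2))⁻¹ *ᵥ (r.1.2.2.1 *ᵥ G (r.1, r.2.1) + r.1.2.2.2.1)))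
  + r.1.2.2.2.1 ⬝ᵥ ((Mw (r.1, r.2.2))⁻¹ *ᵥ (r.1.2.2.1 *ᵥ G (r.1, r.2.1) + r.1.2.2.2.1))

section Smooth

variable {E : Type*} [NormedAddCommGroup E] [NormedSpace ℝ E] {k n : ℕ}

theorem contDiff_det :
    ContDiff ℝ (⊤ : ℕ∞) (fun M : Matrix (Fin k) (Fin k) ℝ => M.det) := by
  have : (fun M : Matrix (Fin k) (Fin k) ℝ => M.det)
      = fun M => ∑ σ : Equiv.Perm (Fin k),
          ((Equiv.Perm.sign σ : ℤ) : ℝ) * ∏ i, M (σ i) i := by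
    funext M; rw [Matrix.det_apply']
  rw [this]
  apply ContDiff.sum
  intro σ _
  apply ContDiff.mul contDiff_const
  apply contDiff_prod
  intro i _
  exact contDiff_apply_apply ℝ ℝ (σ i) i

theorem ContDiff.matrix {f : E → Matrix (Fin k) (Fin k) ℝ}
    (h : ∀ i j, ContDiff ℝ (⊤ : ℕ∞) fun e => f e i j) :
    ContDiff ℝ (⊤ : ℕ∞) f := by
  apply contDiff_pi.2
  intro i
  exact contDiff_pi.2 fun j => h i j

theorem contDiff_adjugate :
    ContDiff ℝ (⊤ : ℕ∞) (fun M : Matrix (Fin k) (Fin k) ℝ => M.adjugate) := by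
  apply ContDiff.matrix
  intro i j
  have : (fun M : Matrix (Fin k) (Fin k) ℝ => M.adjugate i j)
      = (fun M : Matrix (Fin k) (Fin k) ℝ => (M.updateRow j (Pi.single i 1)).det) := by
    funext M; rw [Matrix.adjugate_apply]
  rw [this]
  refine contDiff_det.comp (ContDiff.matrix fun a b => ?_)
  by_cases hab : a = j
  · simp only [Matrix.updateRow_apply, hab, if_true]
    exact contDiff_const
  · simp only [Matrix.updateRow_apply, hab, if_false]
    exact contDiff_apply_apply ℝ ℝ a b

theorem contDiff_dotProd {f g : E → (Fin n → ℝ)}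
    (hf : ContDiff ℝ (⊤ : ℕ∞) f) (hg : ContDiff ℝ (⊤ : ℕ∞) g) :
    ContDiff ℝ (⊤ : ℕ∞) fun e => f e ⬝ᵥ g e := by
  have : (fun e => f e ⬝ᵥ g e) = fun e => ∑ i, f e i * g e i := rfl
  rw [this]
  exact ContDiff.sum fun i _ =>
    ((contDiff_pi.1 hf i).mul (contDiff_pi.1 hg i))

theorem contDiff_mulVecCD {f : E → Matrix (Fin n) (Fin n) ℝ} {g : E → (Fin n → ℝ)}
    (hf : ContDiff ℝ (⊤ : ℕ∞) f) (hg : ContDiff ℝ (⊤ : ℕ∞) g) :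
    ContDiff ℝ (⊤ : ℕ∞) fun e => f e *ᵥ g e := by
  apply contDiff_pi.2
  intro i
  have : (fun e => (f e *ᵥ g e) i) = fun e => (f e i) ⬝ᵥ g e := rfl
  rw [this]
  exact contDiff_dotProd (contDiff_pi.1 hf i) hg

end Smooth

end Stmt5Aux

namespace Stmt5Aux

theorem contDiffAt_dotProd {E : Type*} [NormedAddCommGroup E] [NormedSpace ℝ E] {n : ℕ}
    {f g : E → (Fin n → ℝ)} {x : E}
    (hf : ContDiffAt ℝ (⊤ : ℕ∞) f x) (hg : ContDiffAt ℝ (⊤ : ℕ∞) g x) :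
    ContDiffAt ℝ (⊤ : ℕ∞) (fun e => f e ⬝ᵥ g e) x := by
  have : (fun e => f e ⬝ᵥ g e) = fun e => ∑ i, f e i * g e i := rfl
  rw [this]
  apply ContDiffAt.sum
  intro i _
  exact ((contDiffAt_pi.1 hf i).mul (contDiffAt_pi.1 hg i))

theorem contDiffAt_mulVecCD {E : Type*} [NormedAddCommGroup E] [NormedSpace ℝ E] {n : ℕ}
    {f : E → Matrix (Fin n) (Fin n) ℝ} {g : E → (Fin n → ℝ)} {x : E}
    (hf : ContDiffAt ℝ (⊤ : ℕ∞) f x) (hg : ContDiffAt ℝ (⊤ : ℕ∞) g x) :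
    ContDiffAt ℝ (⊤ : ℕ∞) (fun e => f e *ᵥ g e) x := by
  apply contDiffAt_pi.2
  intro i
  have : (fun e => (f e *ᵥ g e) i) = fun e => (f e i) ⬝ᵥ g e := rfl
  rw [this]
  exact contDiffAt_dotProd (contDiffAt_pi.1 hf i) hg

end Stmt5Aux
namespace Stmt5Aux

variable {n : ℕ}

theorem contDiff_Mw : ContDiff ℝ (⊤ : ℕ∞) (Mw (n := n)) := by
  apply ContDiff.matrix
  intro i j
  have : (fun p : QPParam n × ℝ => Mw p i j)
      = fun p => p.1.1 i j + p.2 * p.1.2.2.1 i j := rfl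
  rw [this]
  fun_prop

theorem contDiff_vw : ContDiff ℝ (⊤ : ℕ∞) (vw (n := n)) := by
  apply contDiff_pi.2
  intro i
  have : (fun p : QPParam n × ℝ => vw p i)
      = fun p => p.1.2.1 i + p.2 * p.1.2.2.2.1 i := rfl
  rw [this]
  exact (((contDiff_apply ℝ ℝ i).comp contDiff_fst.snd.fst).add
    (contDiff_snd.mul ((contDiff_apply ℝ ℝ i).comp
      contDiff_fst.snd.snd.snd.fst)))

theorem G_eq (p : QPParam n × ℝ) :
    G p = -(Ring.inverse (Mw p).det • ((Mw p).adjugate *ᵥ vw p)) := by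
  rw [G, Matrix.inv_def, Matrix.smul_mulVec]

theorem contDiffAt_G {p : QPParam n × ℝ} (hp : (Mw p).det ≠ 0) :
    ContDiffAt ℝ (⊤ : ℕ∞) (G (n := n)) p := by
  have heq : G (n := n) = fun q => -(((Mw q).det)⁻¹ • ((Mw q).adjugate *ᵥ vw q)) := by
    funext q
    rw [G_eq, Ring.inverse_eq_inv']
  rw [heq]
  apply ContDiffAt.neg
  apply ContDiffAt.fun_smul
  · exact ((contDiff_det.comp contDiff_Mw).contDiffAt).inv hp
  · exact (contDiff_mulVecCD (contDiff_adjugate.comp contDiff_Mw) contDiff_vw).contDiffAt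

theorem contDiffAt_Psi {p : QPParam n × ℝ} (hp : (Mw p).det ≠ 0) :
    ContDiffAt ℝ (⊤ : ℕ∞) (Psi (n := n)) p := by
  have heq : Psi (n := n) = fun q =>
      (1 / 2) * ((q.1.2.2.1 *ᵥ G q) ⬝ᵥ G q) + q.1.2.2.2.1 ⬝ᵥ G q + q.1.2.2.2.2 := by
    funext q; rfl
  rw [heq]
  have hG := contDiffAt_G hp
  have hA : ContDiffAt ℝ (⊤ : ℕ∞) (fun q : QPParam n × ℝ => q.1.2.2.1) p :=
    (contDiff_fst.snd.snd.fst).contDiffAt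
  have hbv : ContDiffAt ℝ (⊤ : ℕ∞) (fun q : QPParam n × ℝ => q.1.2.2.2.1) p :=
    (contDiff_fst.snd.snd.snd.fst).contDiffAt
  have halpha : ContDiffAt ℝ (⊤ : ℕ∞) (fun q : QPParam n × ℝ => q.1.2.2.2.2) p :=
    (contDiff_fst.snd.snd.snd.snd).contDiffAt
  refine ContDiffAt.add (ContDiffAt.add ?_ ?_) halpha
  · exact (contDiffAt_const.mul (contDiffAt_dotProd (contDiffAt_mulVecCD hA hG) hG))
  · exact contDiffAt_dotProd hbv hG

theorem continuousAt_Qf {w0 : QPParam n} (hp : (Mw ((w0, (0:ℝ)))).det ≠ 0) :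
    ContinuousAt (Qf (n := n)) (w0, 0, 0) := by
  have hproj1 : ContDiffAt ℝ (⊤ : ℕ∞) (fun r : QPParam n × ℝ × ℝ => (r.1, r.2.1))
      ((w0, 0, 0) : QPParam n × ℝ × ℝ) := (contDiff_fst.prodMk contDiff_snd.fst).contDiffAt
  have hproj2 : ContDiffAt ℝ (⊤ : ℕ∞) (fun r : QPParam n × ℝ × ℝ => (r.1, r.2.2))
      ((w0, 0, 0) : QPParam n × ℝ × ℝ) := (contDiff_fst.prodMk contDiff_snd.snd).contDiffAt
  have h1 : ContDiffAt ℝ (⊤ : ℕ∞) (fun r : QPParam n × ℝ × ℝ => G (r.1, r.2.1))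
      (w0, 0, 0) := ContDiffAt.comp (g := G) (w0, 0, 0) (contDiffAt_G hp) hproj1
  have h2 : ContDiffAt ℝ (⊤ : ℕ∞) (fun r : QPParam n × ℝ × ℝ => G (r.1, r.2.2))
      (w0, 0, 0) := ContDiffAt.comp (g := G) (w0, 0, 0) (contDiffAt_G hp) hproj2
  have hA : ContDiffAt ℝ (⊤ : ℕ∞) (fun r : QPParam n × ℝ × ℝ => r.1.2.2.1)
      ((w0, 0, 0) : QPParam n × ℝ × ℝ) := (contDiff_fst.snd.snd.fst).contDiffAt
  have hbv : ContDiffAt ℝ (⊤ : ℕ∞) (fun r : QPParam n × ℝ × ℝ => r.1.2.2.2.1)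
      ((w0, 0, 0) : QPParam n × ℝ × ℝ) := (contDiff_fst.snd.snd.snd.fst).contDiffAt
  have hMinv : ContDiffAt ℝ (⊤ : ℕ∞)
      (fun r : QPParam n × ℝ × ℝ => (Mw (r.1, r.2.2))⁻¹) (w0, 0, 0) := by
    have heq : (fun r : QPParam n × ℝ × ℝ => (Mw (r.1, r.2.2))⁻¹)
        = fun r => ((Mw (r.1, r.2.2)).det)⁻¹ • (Mw (r.1, r.2.2)).adjugate := by
      funext r; rw [Matrix.inv_def, Ring.inverse_eq_inv']
    rw [heq]
    have hMwr : ContDiffAt ℝ (⊤ : ℕ∞) (fun r : QPParam n × ℝ × ℝ => Mw (r.1, r.2.2))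
        (w0, 0, 0) := (contDiff_Mw.contDiffAt).comp (w0, 0, 0) hproj2
    exact ContDiffAt.fun_smul
      ((contDiff_det.contDiffAt.comp (w0, 0, 0) hMwr).inv hp)
      ((contDiff_adjugate.contDiffAt).comp (w0, 0, 0) hMwr)
  have hz : ContDiffAt ℝ (⊤ : ℕ∞)
      (fun r : QPParam n × ℝ × ℝ =>
        (Mw (r.1, r.2.2))⁻¹ *ᵥ (r.1.2.2.1 *ᵥ G (r.1, r.2.1) + r.1.2.2.2.1)) (w0, 0, 0) :=
    contDiffAt_mulVecCD hMinv ((contDiffAt_mulVecCD hA h1).add hbv)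
  have : ContDiffAt ℝ (⊤ : ℕ∞) (Qf (n := n)) (w0, 0, 0) := by
    unfold Qf
    exact (((contDiffAt_const.mul
        (contDiffAt_dotProd (contDiffAt_mulVecCD hA hz) h2)).add
      (contDiffAt_const.mul
        (contDiffAt_dotProd (contDiffAt_mulVecCD hA h1) hz))).add
      (contDiffAt_dotProd hbv hz))
  exact this.continuousAt

end Stmt5Aux
namespace Stmt5Aux

variable {n : ℕ}

theorem Mw_mulVec (p : QPParam n × ℝ) (x : Fin n → ℝ) :
    Mw p *ᵥ x + vw p
      = (p.1.1 *ᵥ x + p.1.2.1) + p.2 • (p.1.2.2.1 *ᵥ x + p.1.2.2.2.1) := by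
  simp only [Mw, vw, Matrix.add_mulVec, Matrix.smul_mulVec, smul_add]
  abel

theorem G_spec {p : QPParam n × ℝ} (hp : IsUnit (Mw p).det) :
    Mw p *ᵥ G p + vw p = 0 := by
  rw [G, Matrix.mulVec_neg, Matrix.mulVec_mulVec, Matrix.mul_nonsing_inv _ hp,
    Matrix.one_mulVec]
  simp

theorem G_unique {p : QPParam n × ℝ} (hp : IsUnit (Mw p).det) {x : Fin n → ℝ}
    (hx : Mw p *ᵥ x + vw p = 0) : x = G p := by
  have h1 : Mw p *ᵥ x = Mw p *ᵥ G p := by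
    have h2 := G_spec hp
    have : Mw p *ᵥ x = -(vw p) := by linear_combination (norm := module) hx
    rw [this]
    linear_combination (norm := module) - h2
  calc x = (Mw p)⁻¹ *ᵥ (Mw p *ᵥ x) := by
        rw [Matrix.mulVec_mulVec, Matrix.nonsing_inv_mul _ hp, Matrix.one_mulVec]
    _ = (Mw p)⁻¹ *ᵥ (Mw p *ᵥ G p) := by rw [h1]
    _ = G p := by
        rw [Matrix.mulVec_mulVec, Matrix.nonsing_inv_mul _ hp, Matrix.one_mulVec]

theorem G_sub (w : QPParam n) {μ₁ μ₂ : ℝ}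
    (h₁ : IsUnit (Mw (w, μ₁)).det) (h₂ : IsUnit (Mw (w, μ₂)).det) :
    G (w, μ₂) - G (w, μ₁)
      = -(μ₂ - μ₁) • ((Mw (w, μ₂))⁻¹ *ᵥ (w.2.2.1 *ᵥ G (w, μ₁) + w.2.2.2.1)) := by
  have hM : Mw ((w, μ₂) : QPParam n × ℝ) = Mw (w, μ₁) + (μ₂ - μ₁) • w.2.2.1 := by
    simp only [Mw]
    module
  have hv : vw ((w, μ₂) : QPParam n × ℝ) = vw (w, μ₁) + (μ₂ - μ₁) • w.2.2.2.1 := by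
    simp only [vw]
    module
  have key : Mw ((w, μ₂) : QPParam n × ℝ) *ᵥ (G (w, μ₂) - G (w, μ₁))
      = -(μ₂ - μ₁) • (w.2.2.1 *ᵥ G (w, μ₁) + w.2.2.2.1) := by
    have e2 := G_spec h₂
    have e1 := G_spec h₁
    rw [Matrix.mulVec_sub]
    rw [hM] at *
    rw [hv] at e2
    rw [Matrix.add_mulVec, Matrix.add_mulVec, Matrix.smul_mulVec,
      Matrix.smul_mulVec] at *
    linear_combination (norm := module) e2 - e1
  calc G (w, μ₂) - G (w, μ₁)
      = (Mw (w, μ₂))⁻¹ *ᵥ (Mw (w, μ₂) *ᵥ (G (w, μ₂) - G (w, μ₁))) := by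
        rw [Matrix.mulVec_mulVec, Matrix.nonsing_inv_mul _ h₂, Matrix.one_mulVec]
    _ = -(μ₂ - μ₁) • ((Mw (w, μ₂))⁻¹ *ᵥ (w.2.2.1 *ᵥ G (w, μ₁) + w.2.2.2.1)) := by
        rw [key, Matrix.mulVec_smul]

theorem Psi_diff (w : QPParam n) {μ₁ μ₂ : ℝ}
    (h₁ : IsUnit (Mw (w, μ₁)).det) (h₂ : IsUnit (Mw (w, μ₂)).det) :
    Psi (w, μ₂) - Psi (w, μ₁) = -(μ₂ - μ₁) * Qf (w, μ₁, μ₂) := by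
  set y₁ := G ((w, μ₁) : QPParam n × ℝ) with hy₁
  set y₂ := G ((w, μ₂) : QPParam n × ℝ) with hy₂
  set z := (Mw ((w, μ₂) : QPParam n × ℝ))⁻¹ *ᵥ (w.2.2.1 *ᵥ y₁ + w.2.2.2.1) with hz
  have hd : y₂ - y₁ = -(μ₂ - μ₁) • z := G_sub w h₁ h₂
  have hy2 : y₂ = y₁ + -(μ₂ - μ₁) • z := by
    rw [← hd]; abel
  have expand : ∀ u v : Fin n → ℝ,
      Fq w (WithLp.toLp 2 (u + v)) = Fq w (WithLp.toLp 2 u) + (1/2) * (w.2.2.1 *ᵥ v ⬝ᵥ u) + (1/2) * (w.2.2.1 *ᵥ u ⬝ᵥ v)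
        + (1/2) * (w.2.2.1 *ᵥ v ⬝ᵥ v) + w.2.2.2.1 ⬝ᵥ v := by
    intro u v
    show (1 / 2) * (w.2.2.1 *ᵥ (u + v) ⬝ᵥ (u + v)) + w.2.2.2.1 ⬝ᵥ (u + v) + w.2.2.2.2 = _
    show _ = (1 / 2) * (w.2.2.1 *ᵥ u ⬝ᵥ u) + w.2.2.2.1 ⬝ᵥ u + w.2.2.2.2 + _ + _ + _ + _
    rw [Matrix.mulVec_add, add_dotProduct, dotProduct_add,
      dotProduct_add, dotProduct_add]
    ring
  have hQ : Qf ((w, μ₁, μ₂) : QPParam n × ℝ × ℝ)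
      = (1/2) * (w.2.2.1 *ᵥ z ⬝ᵥ y₂) + (1/2) * (w.2.2.1 *ᵥ y₁ ⬝ᵥ z) + w.2.2.2.1 ⬝ᵥ z := rfl
  have hPsi1 : Psi ((w, μ₁) : QPParam n × ℝ) = Fq w (WithLp.toLp 2 y₁) := rfl
  have hPsi2 : Psi ((w, μ₂) : QPParam n × ℝ) = Fq w (WithLp.toLp 2 y₂) := rfl
  rw [hPsi1, hPsi2, hQ, hy2, expand]
  -- now expand the smul dot products
  set t := -(μ₂ - μ₁) with ht
  have e1 : w.2.2.1 *ᵥ (t • z) ⬝ᵥ y₁ = t * (w.2.2.1 *ᵥ z ⬝ᵥ y₁) := by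
    rw [Matrix.mulVec_smul, smul_dotProduct]; rfl
  have e2 : w.2.2.1 *ᵥ y₁ ⬝ᵥ (t • z) = t * (w.2.2.1 *ᵥ y₁ ⬝ᵥ z) := by
    rw [dotProduct_smul]; rfl
  have e3 : w.2.2.1 *ᵥ (t • z) ⬝ᵥ (t • z) = t * (t * (w.2.2.1 *ᵥ z ⬝ᵥ z)) := by
    rw [Matrix.mulVec_smul, smul_dotProduct, dotProduct_smul]; rfl
  have e4 : w.2.2.2.1 ⬝ᵥ (t • z) = t * (w.2.2.2.1 ⬝ᵥ z) := by
    rw [dotProduct_smul]; rfl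
  rw [e1, e2, e3, e4]
  have e5 : w.2.2.1 *ᵥ z ⬝ᵥ (y₁ + t • z) = w.2.2.1 *ᵥ z ⬝ᵥ y₁ + t * (w.2.2.1 *ᵥ z ⬝ᵥ z) := by
    rw [dotProduct_add, dotProduct_smul]; rfl
  rw [e5]
  ring

end Stmt5Aux
namespace Stmt5Aux

variable {n : ℕ}

theorem detD_ne_zero {D A : Matrix (Fin n) (Fin n) ℝ} {b : Fin n → ℝ} {x0 : En n}
    (h1 : (blockMat D (A.mulVec x0 + b)).det ≠ 0)
    (h3 : ∀ v : Fin n → ℝ, D.mulVec v = 0 → (A.mulVec x0 + b) ⬝ᵥ v = 0) :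
    D.det ≠ 0 := by
  intro hdet
  obtain ⟨v, hv0, hDv⟩ := (Matrix.exists_mulVec_eq_zero_iff).2 hdet
  apply h1
  apply (Matrix.exists_mulVec_eq_zero_iff).1
  refine ⟨Sum.elim v 0, ?_, ?_⟩
  · intro h
    apply hv0
    funext i
    have := congrFun h (Sum.inl i)
    simpa using this
  · set u := A.mulVec x0 + b
    have huv := h3 v hDv
    funext i
    rw [blockMat, Matrix.fromBlocks_mulVec]
    cases i with
    | inl i =>
      simp only [Sum.elim_inl]
      have h1' : (Sum.elim v 0 : Fin n ⊕ Unit → ℝ) ∘ Sum.inl = v := rfl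
      have h2' : (Sum.elim v 0 : Fin n ⊕ Unit → ℝ) ∘ Sum.inr = 0 := rfl
      rw [h1', h2']
      simp [hDv]
    | inr i =>
      simp only [Sum.elim_inr]
      have h1' : (Sum.elim v 0 : Fin n ⊕ Unit → ℝ) ∘ Sum.inl = v := rfl
      have h2' : (Sum.elim v 0 : Fin n ⊕ Unit → ℝ) ∘ Sum.inr = 0 := rfl
      rw [h1', h2']
      have : (Matrix.of fun (_ : Unit) j => u j) *ᵥ v = fun _ => u ⬝ᵥ v := rfl
      simp [this, huv]

theorem beta_pos {D A : Matrix (Fin n) (Fin n) ℝ} {b : Fin n → ℝ} {x0 : En n}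
    (h1 : (blockMat D (A.mulVec x0 + b)).det ≠ 0)
    (h2 : ∀ v : Fin n → ℝ, ∀ γ : ℝ,
      D.mulVec v + γ • (A.mulVec x0 + b) = 0 → 0 ≤ γ →
      (A.mulVec x0 + b) ⬝ᵥ v ≤ 0)
    (h3 : ∀ v : Fin n → ℝ, D.mulVec v = 0 → (A.mulVec x0 + b) ⬝ᵥ v = 0) :
    0 < (A.mulVec x0 + b) ⬝ᵥ (D⁻¹ *ᵥ (A.mulVec x0 + b)) := by
  set u := A.mulVec x0 + b with hu
  have hdet : D.det ≠ 0 := detD_ne_zero h1 h3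
  have hdet' : IsUnit D.det := isUnit_iff_ne_zero.2 hdet
  -- nonnegativity via h2
  have hge : 0 ≤ u ⬝ᵥ (D⁻¹ *ᵥ u) := by
    have hstat : D.mulVec (-(D⁻¹ *ᵥ u)) + (1:ℝ) • u = 0 := by
      rw [Matrix.mulVec_neg, Matrix.mulVec_mulVec, Matrix.mul_nonsing_inv _ hdet',
        Matrix.one_mulVec, one_smul]
      abel
    have := h2 (-(D⁻¹ *ᵥ u)) 1 hstat zero_le_one
    have hneg : u ⬝ᵥ -(D⁻¹ *ᵥ u) = -(u ⬝ᵥ (D⁻¹ *ᵥ u)) := by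
      rw [dotProduct_neg]
    rw [hneg] at this
    linarith
  -- nonvanishing via Schur complement
  have hne : u ⬝ᵥ (D⁻¹ *ᵥ u) ≠ 0 := by
    intro hzero
    apply h1
    have : Invertible D := D.invertibleOfIsUnitDet hdet'
    rw [blockMat, Matrix.det_fromBlocks₁₁]
    have hinv : (⅟D : Matrix (Fin n) (Fin n) ℝ) = D⁻¹ := Matrix.invOf_eq_nonsing_inv D
    have hdetval : ((0 : Matrix Unit Unit ℝ)
        - (Matrix.of fun (_ : Unit) j => u j) * ⅟D * (Matrix.of fun i (_ : Unit) => u i)).det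
        = -(u ⬝ᵥ (D⁻¹ *ᵥ u)) := by
      rw [Matrix.det_unique]
      simp only [Matrix.sub_apply, Matrix.zero_apply, hinv]
      rw [zero_sub]
      congr 1
      show ((Matrix.of fun (_ : Unit) j => u j) * D⁻¹ * Matrix.of fun i (_ : Unit) => u i)
          default default = u ⬝ᵥ (D⁻¹ *ᵥ u)
      simp only [Matrix.mul_apply, Matrix.of_apply, dotProduct,
        Matrix.mulVec, Finset.sum_mul, Finset.mul_sum]
      rw [Finset.sum_comm]
      apply Finset.sum_congr rfl; intro j _
      apply Finset.sum_congr rfl; intro k _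
      ring
    rw [hdetval, hzero]
    simp
  exact lt_of_le_of_ne hge (Ne.symm hne)

end Stmt5Aux
namespace Stmt5Aux

variable {n : ℕ}

theorem Qf_base {D A : Matrix (Fin n) (Fin n) ℝ} {c b : Fin n → ℝ} {α : ℝ} {x0 : En n}
    (hA : A.IsSymm) (hG : G (((D, c, A, b, α) : QPParam n), (0:ℝ)) = fun i => x0 i)
    (hMw : Mw (((D, c, A, b, α) : QPParam n), (0:ℝ)) = D) :
    Qf (((D, c, A, b, α) : QPParam n), (0:ℝ), (0:ℝ))
      = (A.mulVec x0 + b) ⬝ᵥ (D⁻¹ *ᵥ (A.mulVec x0 + b)) := by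
  have hx0 : (fun i => x0 i) = fun i => x0 i := rfl
  show (1/2) * (A *ᵥ ((Mw (((D, c, A, b, α) : QPParam n), (0:ℝ)))⁻¹
          *ᵥ (A *ᵥ G (((D, c, A, b, α) : QPParam n), (0:ℝ)) + b))
        ⬝ᵥ G (((D, c, A, b, α) : QPParam n), (0:ℝ)))
      + (1/2) * (A *ᵥ G (((D, c, A, b, α) : QPParam n), (0:ℝ))
        ⬝ᵥ ((Mw (((D, c, A, b, α) : QPParam n), (0:ℝ)))⁻¹
          *ᵥ (A *ᵥ G (((D, c, A, b, α) : QPParam n), (0:ℝ)) + b)))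
      + b ⬝ᵥ ((Mw (((D, c, A, b, α) : QPParam n), (0:ℝ)))⁻¹
          *ᵥ (A *ᵥ G (((D, c, A, b, α) : QPParam n), (0:ℝ)) + b)) = _
  rw [hG, hMw]
  have hax : A *ᵥ (fun i => x0 i) = A.mulVec x0 := rfl
  rw [hax]
  set u := A.mulVec x0 + b with hu
  set z := D⁻¹ *ᵥ u with hz
  have key : A *ᵥ z ⬝ᵥ (fun i => x0 i) = A.mulVec x0 ⬝ᵥ z := by
    rw [dotProduct_comm, Matrix.dotProduct_mulVec, ← Matrix.mulVec_transpose, hA.eq]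
  rw [key]
  have : u ⬝ᵥ z = A.mulVec x0 ⬝ᵥ z + b ⬝ᵥ z := by
    rw [hu, add_dotProduct]
  rw [this]
  ring

theorem norm_euclid_le (v : En n) (s : ℝ) (hs0 : 0 ≤ s) (hs : ∀ i, |v i| ≤ s) :
    ‖v‖ ≤ Real.sqrt n * s := by
  rw [EuclideanSpace.norm_eq]
  have h1 : ∑ i, ‖v i‖ ^ 2 ≤ (n : ℝ) * s ^ 2 := by
    calc ∑ i, ‖v i‖ ^ 2 ≤ ∑ _i : Fin n, s ^ 2 := by
          apply Finset.sum_le_sum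
          intro i _
          have h2 : ‖v i‖ ≤ s := by rw [Real.norm_eq_abs]; exact hs i
          have h3 : (0:ℝ) ≤ ‖v i‖ := norm_nonneg _
          nlinarith
      _ = (n : ℝ) * s ^ 2 := by
          rw [Finset.sum_const, Finset.card_univ, Fintype.card_fin, nsmul_eq_mul]
  calc Real.sqrt (∑ i, ‖v i‖ ^ 2) ≤ Real.sqrt ((n : ℝ) * s ^ 2) :=
        Real.sqrt_le_sqrt h1
    _ = Real.sqrt n * s := by
        rw [Real.sqrt_mul (Nat.cast_nonneg n), Real.sqrt_sq hs0]

theorem cont_Ax_b : Continuous fun q : QPParam n × En n =>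
    q.1.2.2.1 *ᵥ (fun i => q.2 i) + q.1.2.2.2.1 := by
  apply continuous_pi
  intro i
  have : (fun q : QPParam n × En n => (q.1.2.2.1 *ᵥ (fun i => q.2 i) + q.1.2.2.2.1) i)
      = fun q => (∑ j, q.1.2.2.1 i j * q.2 j) + q.1.2.2.2.1 i := rfl
  rw [this]
  apply Continuous.add
  · apply continuous_finset_sum
    intro j _
    fun_prop
  · exact (continuous_apply i).comp continuous_fst.snd.snd.snd.fst

theorem cont_Dx_c : Continuous fun q : QPParam n × En n =>
    q.1.1 *ᵥ (fun i => q.2 i) + q.1.2.1 := by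
  apply continuous_pi
  intro i
  have : (fun q : QPParam n × En n => (q.1.1 *ᵥ (fun i => q.2 i) + q.1.2.1) i)
      = fun q => (∑ j, q.1.1 i j * q.2 j) + q.1.2.1 i := rfl
  rw [this]
  apply Continuous.add
  · apply continuous_finset_sum
    intro j _
    fun_prop
  · exact (continuous_apply i).comp continuous_fst.snd.fst

end Stmt5Aux
open Stmt5Aux in
set_option maxHeartbeats 2000000 in
/-- For `(QP_w)` with `F(x0,w0) = 0`, `A x0 + b ≠ 0` and Lagrange
multiplier `λ = 0`: under conditions (i)–(iii), `S` is locally Lipschitz-like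
around `(w0, x0)`. -/
theorem stmt5 {n : ℕ} (hn : 1 ≤ n)
    (D A : Matrix (Fin n) (Fin n) ℝ) (c b : Fin n → ℝ) (α : ℝ) (x0 : En n)
    (hD : D.IsSymm) (hA : A.IsSymm)
    (hF : Fq (D, c, A, b, α) x0 = 0)
    (hb : A.mulVec x0 + b ≠ 0)
    (hstat : D.mulVec x0 + c = 0)
    (h1 : (blockMat D (A.mulVec x0 + b)).det ≠ 0)
    (h2 : ∀ v : Fin n → ℝ, ∀ γ : ℝ,
      D.mulVec v + γ • (A.mulVec x0 + b) = 0 → 0 ≤ γ →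
      (A.mulVec x0 + b) ⬝ᵥ v ≤ 0)
    (h3 : ∀ v : Fin n → ℝ, D.mulVec v = 0 → (A.mulVec x0 + b) ⬝ᵥ v = 0) :
    LipschitzLike Sqp (D, c, A, b, α) x0 := by
  classical
  set w0 : QPParam n := (D, c, A, b, α) with hw0
  set p0 : QPParam n × ℝ := (w0, 0) with hp0def
  have hMw0 : Mw p0 = D := by
    show D + (0:ℝ) • A = D
    rw [zero_smul, add_zero]
  have hvw0 : vw p0 = c := by
    show c + (0:ℝ) • b = c
    rw [zero_smul, add_zero]
  have hdetD : D.det ≠ 0 := detD_ne_zero h1 h3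
  have hdetp0 : (Mw p0).det ≠ 0 := by rw [hMw0]; exact hdetD
  have hdetp0' : IsUnit (Mw p0).det := isUnit_iff_ne_zero.2 hdetp0
  have hGp0 : (fun i => x0 i) = G p0 := by
    apply G_unique hdetp0'
    rw [hMw0, hvw0]
    exact hstat
  set u : Fin n → ℝ := A.mulVec x0 + b with hudef
  set β : ℝ := u ⬝ᵥ (D⁻¹ *ᵥ u) with hβdef
  have hβ : 0 < β := beta_pos h1 h2 h3
  set βh : ℝ := β / 2 with hβhdef
  have hβhpos : 0 < βh := by positivity
  -- Lipschitz data for G and Psi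
  obtain ⟨K, s, hs, hKs⟩ :=
    ((contDiffAt_G hdetp0).of_le (by exact_mod_cast le_top)).exists_lipschitzOnWith
  obtain ⟨K₂, s₂, hs₂, hKs₂⟩ :=
    ((contDiffAt_Psi hdetp0).of_le (by exact_mod_cast le_top)).exists_lipschitzOnWith
  set Kr : ℝ := (K : ℝ) with hKrdef
  set Kr₂ : ℝ := (K₂ : ℝ) with hKr₂def
  have hKr : 0 ≤ Kr := K.coe_nonneg
  have hKr₂ : 0 ≤ Kr₂ := K₂.coe_nonneg
  -- determinant nonvanishing neighborhood
  have hdetcont : ContinuousAt (fun p : QPParam n × ℝ => (Mw p).det) p0 :=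
    ((contDiff_det.comp contDiff_Mw).continuous).continuousAt
  have hsdet : {p : QPParam n × ℝ | (Mw p).det ≠ 0} ∈ nhds p0 :=
    hdetcont.preimage_mem_nhds (compl_singleton_mem_nhds hdetp0)
  obtain ⟨ε₀, hε₀, hball₀⟩ :=
    Metric.mem_nhds_iff.1 (Filter.inter_mem (Filter.inter_mem hs hs₂) hsdet)
  -- Qf bound neighborhood
  have hQbase : Qf ((w0, 0, 0) : QPParam n × ℝ × ℝ) = β := Qf_base hA hGp0.symm hMw0
  have hQcont : ContinuousAt (Qf (n := n)) ((w0, 0, 0) : QPParam n × ℝ × ℝ) :=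
    continuousAt_Qf hdetp0
  have hQnhds : {r : QPParam n × ℝ × ℝ | βh < Qf r} ∈ nhds ((w0, 0, 0) : QPParam n × ℝ × ℝ) := by
    apply hQcont.preimage_mem_nhds
    apply Ioi_mem_nhds
    rw [hQbase]
    linarith
  obtain ⟨ε₂, hε₂, hball₂⟩ := Metric.mem_nhds_iff.1 hQnhds
  set ε₃ : ℝ := min ε₀ ε₂ with hε₃def
  have hε₃ : 0 < ε₃ := lt_min hε₀ hε₂
  -- membership utilities
  have hmem : ∀ w : QPParam n, dist w w0 < ε₃ → ∀ μ : ℝ, |μ| < ε₃ →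
      ((w, μ) : QPParam n × ℝ) ∈ s ∧ ((w, μ) : QPParam n × ℝ) ∈ s₂ ∧
        IsUnit (Mw ((w, μ) : QPParam n × ℝ)).det := by
    intro w hw μ hμ
    have hd : dist ((w, μ) : QPParam n × ℝ) p0 < ε₀ := by
      rw [hp0def, Prod.dist_eq]
      have hμ0 : dist μ (0:ℝ) = |μ| := by rw [Real.dist_eq, sub_zero]
      rw [hμ0]
      exact max_lt (lt_of_lt_of_le hw (min_le_left _ _)) (lt_of_lt_of_le hμ (min_le_left _ _))
    have hmemb := hball₀ hd
    exact ⟨hmemb.1.1, hmemb.1.2, isUnit_iff_ne_zero.2 hmemb.2⟩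
  have hQbnd : ∀ w : QPParam n, dist w w0 < ε₃ → ∀ μ₁ μ₂ : ℝ, |μ₁| < ε₃ → |μ₂| < ε₃ →
      βh < Qf ((w, μ₁, μ₂) : QPParam n × ℝ × ℝ) := by
    intro w hw μ₁ μ₂ hμ₁ hμ₂
    apply hball₂
    rw [Metric.mem_ball]
    have e₀ : dist ((w, μ₁, μ₂) : QPParam n × ℝ × ℝ) ((w0, 0, 0) : QPParam n × ℝ × ℝ)
        = max (dist w w0) (max (dist μ₁ (0:ℝ)) (dist μ₂ (0:ℝ))) := by
      rw [Prod.dist_eq (x := ((w, μ₁, μ₂) : QPParam n × ℝ × ℝ)) (y := ((w0, 0, 0) : QPParam n × ℝ × ℝ))]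
      rw [Prod.dist_eq (x := ((μ₁, μ₂) : ℝ × ℝ)) (y := ((0, 0) : ℝ × ℝ))]
    have e₁ : dist μ₁ (0:ℝ) = |μ₁| := by rw [Real.dist_eq, sub_zero]
    have e₂ : dist μ₂ (0:ℝ) = |μ₂| := by rw [Real.dist_eq, sub_zero]
    rw [e₀, e₁, e₂]
    exact max_lt (lt_of_lt_of_le hw (min_le_right _ _))
      (max_lt (lt_of_lt_of_le hμ₁ (min_le_right _ _)) (lt_of_lt_of_le hμ₂ (min_le_right _ _)))
  -- rate of decrease of Psi in μ
  have hrate : ∀ w : QPParam n, dist w w0 < ε₃ → ∀ μ₁ μ₂ : ℝ, 0 ≤ μ₁ → μ₁ ≤ μ₂ → μ₂ < ε₃ →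
      Psi ((w, μ₂) : QPParam n × ℝ) ≤ Psi ((w, μ₁) : QPParam n × ℝ) - βh * (μ₂ - μ₁) := by
    intro w hw μ₁ μ₂ h0 h12 h2'
    have habs₁ : |μ₁| < ε₃ := by rw [abs_of_nonneg h0]; linarith
    have habs₂ : |μ₂| < ε₃ := by rw [abs_of_nonneg (le_trans h0 h12)]; linarith
    have hU1 := (hmem w hw μ₁ habs₁).2.2
    have hU2 := (hmem w hw μ₂ habs₂).2.2
    have hdiff := Psi_diff w hU1 hU2
    have hq := hQbnd w hw μ₁ μ₂ habs₁ habs₂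
    have hμnn : 0 ≤ μ₂ - μ₁ := sub_nonneg.2 h12
    have hmul : (μ₂ - μ₁) * βh ≤ (μ₂ - μ₁) * Qf ((w, μ₁, μ₂) : QPParam n × ℝ × ℝ) :=
      mul_le_mul_of_nonneg_left (le_of_lt hq) hμnn
    linarith [hdiff, hmul]
  -- neighborhood controlling the multiplier size
  have hη : (0:ℝ) < ‖u‖ := norm_pos_iff.2 hb
  set η : ℝ := ‖u‖ with hηdef
  set θ : ℝ := ε₃ * η / 4 with hθdef
  have hθpos : 0 < θ := by positivity
  have hT : {q : QPParam n × En n |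
      η / 2 < ‖q.1.2.2.1 *ᵥ (fun i => q.2 i) + q.1.2.2.2.1‖
      ∧ ‖q.1.1 *ᵥ (fun i => q.2 i) + q.1.2.1‖ < θ} ∈ nhds ((w0, x0) : QPParam n × En n) := by
    apply Filter.inter_mem
    · show ((fun q : QPParam n × En n => ‖q.1.2.2.1 *ᵥ (fun i => q.2 i) + q.1.2.2.2.1‖) ⁻¹'
          Set.Ioi (η / 2)) ∈ nhds ((w0, x0) : QPParam n × En n)
      apply ContinuousAt.preimage_mem_nhds (cont_Ax_b.norm.continuousAt)
      apply Ioi_mem_nhds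
      show η / 2 < ‖A *ᵥ (fun i => x0 i) + b‖
      have : A *ᵥ (fun i => x0 i) + b = u := rfl
      rw [this]
      linarith
    · show ((fun q : QPParam n × En n => ‖q.1.1 *ᵥ (fun i => q.2 i) + q.1.2.1‖) ⁻¹'
          Set.Iio θ) ∈ nhds ((w0, x0) : QPParam n × En n)
      apply ContinuousAt.preimage_mem_nhds (cont_Dx_c.norm.continuousAt)
      apply Iio_mem_nhds
      show ‖D *ᵥ (fun i => x0 i) + c‖ < θ
      have : D *ᵥ (fun i => x0 i) + c = 0 := hstat
      rw [this, norm_zero]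
      exact hθpos
  obtain ⟨V₁, hV₁, U, hU, hVU⟩ := mem_nhds_prod_iff.1 hT
  set rV : ℝ := min (ε₃ / 2) (ε₃ * βh / (8 * (Kr₂ + 1))) with hrVdef
  have hrV : 0 < rV := by positivity
  refine ⟨Real.sqrt n * Kr * max 1 (Kr₂ / βh) + 1, by positivity, U, hU,
    Metric.ball w0 rV ∩ V₁, Filter.inter_mem (Metric.ball_mem_nhds _ hrV) hV₁, ?_⟩
  intro w hw w' hw' x hx
  obtain ⟨⟨hFx, m, hm0, hmstat, hmcomp⟩, hxU⟩ := hx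
  have hrVε : rV ≤ ε₃ / 2 := min_le_left _ _
  have hwball : dist w w0 < ε₃ := by
    have := hw.1
    rw [Metric.mem_ball] at this
    linarith
  have hw'ball : dist w' w0 < ε₃ := by
    have := hw'.1
    rw [Metric.mem_ball] at this
    linarith
  -- multiplier bound
  have hTx := hVU (Set.mk_mem_prod hw'.2 hxU)
  obtain ⟨hΦ1, hΦ2⟩ := hTx
  have hmnorm : m * ‖w'.2.2.1 *ᵥ (fun i => x i) + w'.2.2.2.1‖
      = ‖w'.1 *ᵥ (fun i => x i) + w'.2.1‖ := by
    have hsm : m • (w'.2.2.1 *ᵥ (fun i => x i) + w'.2.2.2.1)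
        = -(w'.1 *ᵥ (fun i => x i) + w'.2.1) := by
      linear_combination (norm := module) hmstat
    calc m * ‖w'.2.2.1 *ᵥ (fun i => x i) + w'.2.2.2.1‖
        = ‖m • (w'.2.2.1 *ᵥ (fun i => x i) + w'.2.2.2.1)‖ := by
          rw [norm_smul, Real.norm_eq_abs, abs_of_nonneg hm0]
      _ = ‖w'.1 *ᵥ (fun i => x i) + w'.2.1‖ := by rw [hsm, norm_neg]
  have hm : m < ε₃ / 2 := by
    have e1 : m * (η / 2) ≤ m * ‖w'.2.2.1 *ᵥ (fun i => x i) + w'.2.2.2.1‖ :=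
      mul_le_mul_of_nonneg_left (le_of_lt hΦ1) hm0
    have e2 : m * ‖w'.2.2.1 *ᵥ (fun i => x i) + w'.2.2.2.1‖ < θ := by
      rw [hmnorm]; exact hΦ2
    have e3 : m * (η / 2) < θ := lt_of_le_of_lt e1 e2
    by_contra hc
    push_neg at hc
    have e4 : ε₃ / 2 * (η / 2) ≤ m * (η / 2) :=
      mul_le_mul_of_nonneg_right hc (by positivity)
    have e5 : θ = ε₃ * η / 4 := hθdef
    linarith [e3, e4, e5]
  have hmε : m < ε₃ := by linarith
  -- x coincides with G (w', m)
  have hw'mem := hmem w' hw'ball m (by rw [abs_of_nonneg hm0]; exact hmε)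
  have hxG : (fun i => x i) = G ((w', m) : QPParam n × ℝ) := by
    apply G_unique hw'mem.2.2
    rw [Mw_mulVec]
    exact hmstat
  set Δ : ℝ := dist w' w with hΔdef
  have hΔ0 : 0 ≤ Δ := dist_nonneg
  have hΔub : Δ < 2 * rV := by
    have h1' := hw'.1
    have h2' := hw.1
    rw [Metric.mem_ball] at h1' h2'
    calc Δ ≤ dist w' w0 + dist w0 w := dist_triangle _ _ _
      _ < rV + rV := by rw [dist_comm w0 w]; exact add_lt_add h1' h2'
      _ = 2 * rV := by ring
  set δ : ℝ := Kr₂ / βh * Δ with hδdef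
  have hδ0 : 0 ≤ δ := by positivity
  have hδub : δ ≤ ε₃ / 4 := by
    have hrV2 : rV ≤ ε₃ * βh / (8 * (Kr₂ + 1)) := min_le_right _ _
    rw [hδdef, div_mul_eq_mul_div, div_le_iff₀ hβhpos]
    have h1' : Kr₂ * Δ ≤ Kr₂ * (2 * (ε₃ * βh / (8 * (Kr₂ + 1)))) := by
      apply mul_le_mul_of_nonneg_left _ hKr₂
      linarith
    have h2' : Kr₂ * (2 * (ε₃ * βh / (8 * (Kr₂ + 1))))
        ≤ (Kr₂ + 1) * (2 * (ε₃ * βh / (8 * (Kr₂ + 1)))) := by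
      apply mul_le_mul_of_nonneg_right (by linarith)
      positivity
    have h3' : (Kr₂ + 1) * (2 * (ε₃ * βh / (8 * (Kr₂ + 1)))) = ε₃ * βh / 4 := by
      have hne : (Kr₂ + 1) ≠ 0 := by positivity
      field_simp
      ring
    have h4' : ε₃ * βh / 4 = ε₃ / 4 * βh := by ring
    linarith
  have hβδ : βh * δ = Kr₂ * Δ := by
    rw [hδdef]
    field_simp
  -- Psi comparisons at μ = m
  have hwmemμ : ∀ μ : ℝ, 0 ≤ μ → μ < ε₃ →
      ((w, μ) : QPParam n × ℝ) ∈ s ∧ ((w, μ) : QPParam n × ℝ) ∈ s₂ ∧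
        IsUnit (Mw ((w, μ) : QPParam n × ℝ)).det := by
    intro μ h0' h1'
    exact hmem w hwball μ (by rw [abs_of_nonneg h0']; exact h1')
  have hPsiw'm : Psi ((w', m) : QPParam n × ℝ) = Fq w' x := by
    show Fq w' (WithLp.toLp 2 (G ((w', m) : QPParam n × ℝ))) = Fq w' x
    rw [← hxG]
  have hLipPsi : |Psi ((w, m) : QPParam n × ℝ) - Psi ((w', m) : QPParam n × ℝ)| ≤ Kr₂ * Δ := by
    have hd := hKs₂.dist_le_mul ((w, m) : QPParam n × ℝ) (hwmemμ m hm0 hmε).2.1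
      ((w', m) : QPParam n × ℝ) hw'mem.2.1
    have hdeq : dist ((w, m) : QPParam n × ℝ) ((w', m) : QPParam n × ℝ) = Δ := by
      rw [Prod.dist_eq, dist_self, hΔdef, dist_comm w w']
      exact max_eq_left dist_nonneg
    rw [hdeq, Real.dist_eq] at hd
    exact hd
  have hψm_ub : Psi ((w, m) : QPParam n × ℝ) ≤ Kr₂ * Δ := by
    have h1' := (abs_le.1 hLipPsi).2
    have h2' : Fq w' x ≤ 0 := hFx
    rw [hPsiw'm] at h1'
    linarith
  have hψm_lb : 0 < m → -(Kr₂ * Δ) ≤ Psi ((w, m) : QPParam n × ℝ) := by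
    intro hmpos
    have hFq0 : Fq w' x = 0 := by
      rcases mul_eq_zero.1 hmcomp with h | h
      · exact absurd h (ne_of_gt hmpos)
      · exact h
    have h1' := (abs_le.1 hLipPsi).1
    rw [hPsiw'm, hFq0] at h1'
    linarith
  -- locate the multiplier for w
  set a : ℝ := max 0 (m - δ) with hadef
  have ha0 : 0 ≤ a := le_max_left _ _
  have ham : a ≤ m := max_le hm0 (by linarith)
  have hmδε : m + δ < ε₃ := by linarith
  have hcontψ : ContinuousOn (fun μ => Psi ((w, μ) : QPParam n × ℝ)) (Set.Icc a (m + δ)) := by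
    have hlc : ContinuousOn (Psi (n := n)) s₂ := hKs₂.continuousOn
    apply hlc.comp ((continuous_const.prodMk continuous_id).continuousOn)
    intro μ hμ
    exact (hwmemμ μ (le_trans ha0 hμ.1) (lt_of_le_of_lt hμ.2 hmδε)).2.1
  have hexists : ∃ μst : ℝ, 0 ≤ μst ∧ μst ≤ m + δ ∧ |μst - m| ≤ δ ∧
      (Psi ((w, μst) : QPParam n × ℝ) = 0 ∨
        (μst = 0 ∧ Psi ((w, μst) : QPParam n × ℝ) ≤ 0)) := by
    by_cases hψa : Psi ((w, a) : QPParam n × ℝ) < 0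
    · have haz : a = 0 := by
        by_contra hne
        have hapos : 0 < a := lt_of_le_of_ne ha0 (Ne.symm hne)
        have haeq : a = m - δ := by
          rcases max_cases (0:ℝ) (m - δ) with ⟨h', _⟩ | ⟨h', _⟩
          · exact absurd (hadef.trans h') hne
          · exact hadef.trans h'
        have hmpos : 0 < m := by
          have : 0 < m - δ := haeq ▸ hapos
          linarith
        have hr := hrate w hwball a m ha0 ham hmε
        have hl := hψm_lb hmpos
        rw [haeq] at hψa hr
        -- Psi(w,m) ≤ Psi(w,m-δ) - βh * δ  and  Psi(w,m-δ) < 0, Psi(w,m) ≥ -Kr₂Δ = -βhδ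
        have hee : βh * (m - (m - δ)) = βh * δ := by ring
        linarith [hr, hl, hψa, hβδ, hee]
      refine ⟨0, le_refl 0, by linarith, ?_, Or.inr ⟨rfl, ?_⟩⟩
      · have hmd : m - δ ≤ 0 := by
          by_contra hc
          push_neg at hc
          have : a = m - δ := max_eq_right (le_of_lt hc)
          rw [this] at haz
          linarith
        rw [zero_sub, abs_neg, abs_of_nonneg hm0]
        linarith
      · exact le_of_lt (haz ▸ hψa)
    · push_neg at hψa
      have hub : Psi ((w, m + δ) : QPParam n × ℝ) ≤ 0 := by
        have hr := hrate w hwball m (m + δ) hm0 (by linarith) hmδε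
        have hee : βh * (m + δ - m) = βh * δ := by ring
        linarith [hr, hβδ, hψm_ub, hee]
      have hIVT := intermediate_value_Icc' (le_trans ham (by linarith : m ≤ m + δ)) hcontψ
      have h0mem : (0:ℝ) ∈ Set.Icc (Psi ((w, m + δ) : QPParam n × ℝ))
          (Psi ((w, a) : QPParam n × ℝ)) := ⟨hub, hψa⟩
      obtain ⟨μst, hμstIcc, hval⟩ := hIVT h0mem
      refine ⟨μst, le_trans ha0 hμstIcc.1, hμstIcc.2, ?_, Or.inl hval⟩
      rw [abs_le]
      constructor
      · have : m - δ ≤ a := le_max_right _ _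
        linarith [hμstIcc.1]
      · linarith [hμstIcc.2]
  obtain ⟨μst, hμst0, hμstub, hμstdist, hcase⟩ := hexists
  have hμstε : μst < ε₃ := lt_of_le_of_lt hμstub hmδε
  have hwμmem := hwmemμ μst hμst0 hμstε
  refine ⟨WithLp.toLp 2 (G ((w, μst) : QPParam n × ℝ)), ?_, ?_⟩
  · -- membership in Sqp w
    constructor
    · show Fq w (WithLp.toLp 2 (G ((w, μst) : QPParam n × ℝ))) ≤ 0
      rcases hcase with h | h
      · exact le_of_eq h
      · exact h.2
    · refine ⟨μst, hμst0, ?_, ?_⟩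
      · have hspec := G_spec hwμmem.2.2
        rw [Mw_mulVec] at hspec
        exact hspec
      · rcases hcase with h | h
        · show μst * Psi ((w, μst) : QPParam n × ℝ) = 0
          rw [h, mul_zero]
        · rw [h.1, zero_mul]
  · -- distance bound
    have hGdist := hKs.dist_le_mul ((w', m) : QPParam n × ℝ) hw'mem.1
      ((w, μst) : QPParam n × ℝ) hwμmem.1
    have hdeq : dist ((w', m) : QPParam n × ℝ) ((w, μst) : QPParam n × ℝ)
        = max Δ |m - μst| := by
      rw [Prod.dist_eq, Real.dist_eq, hΔdef]
    rw [hdeq] at hGdist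
    have hmax : max Δ |m - μst| ≤ max 1 (Kr₂ / βh) * Δ := by
      apply max_le
      · calc Δ = 1 * Δ := (one_mul Δ).symm
          _ ≤ max 1 (Kr₂ / βh) * Δ := mul_le_mul_of_nonneg_right (le_max_left _ _) hΔ0
      · have h1' : |m - μst| ≤ δ := by rwa [abs_sub_comm] at hμstdist
        calc |m - μst| ≤ Kr₂ / βh * Δ := by rw [← hδdef]; exact h1'
          _ ≤ max 1 (Kr₂ / βh) * Δ := mul_le_mul_of_nonneg_right (le_max_right _ _) hΔ0
    have hGd2 : dist (G ((w', m) : QPParam n × ℝ)) (G ((w, μst) : QPParam n × ℝ))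
        ≤ Kr * (max 1 (Kr₂ / βh) * Δ) := by
      calc dist (G ((w', m) : QPParam n × ℝ)) (G ((w, μst) : QPParam n × ℝ))
          ≤ Kr * max Δ |m - μst| := hGdist
        _ ≤ Kr * (max 1 (Kr₂ / βh) * Δ) := mul_le_mul_of_nonneg_left hmax hKr
    refine le_trans (norm_euclid_le _ (Kr * (max 1 (Kr₂ / βh) * Δ)) (by positivity) ?_) ?_
    · intro i
      show |x i - G ((w, μst) : QPParam n × ℝ) i| ≤ Kr * (max 1 (Kr₂ / βh) * Δ)
      rw [show x i = G ((w', m) : QPParam n × ℝ) i from congrFun hxG i]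
      calc |G ((w', m) : QPParam n × ℝ) i - G ((w, μst) : QPParam n × ℝ) i|
          = |(G ((w', m) : QPParam n × ℝ) - G ((w, μst) : QPParam n × ℝ)) i| := rfl
        _
          ≤ ‖G ((w', m) : QPParam n × ℝ) - G ((w, μst) : QPParam n × ℝ)‖ := by
            rw [← Real.norm_eq_abs]
            exact norm_le_pi_norm _ i
        _ = dist (G ((w', m) : QPParam n × ℝ)) (G ((w, μst) : QPParam n × ℝ)) :=
            (dist_eq_norm _ _).symm
        _ ≤ Kr * (max 1 (Kr₂ / βh) * Δ) := hGd2
    · have hΔnorm : Δ = ‖w' - w‖ := by rw [hΔdef, dist_eq_norm]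
      rw [← hΔnorm]
      have he : Real.sqrt n * (Kr * (max 1 (Kr₂ / βh) * Δ))
          = (Real.sqrt n * Kr * max 1 (Kr₂ / βh)) * Δ := by ring
      rw [he]
      exact mul_le_mul_of_nonneg_right (by linarith) hΔ0
end
end

section
/- Let f₀,F : ℝⁿ×ℝ^d → ℝ be C² functions and let (x̄,w̄) satisfy F(x̄,w̄) < 0 and ∇ₓf₀(x̄,w̄) = 0 (so x̄ ∈ S(w̄)). If the Hessian ∇²ₓₓf₀(x̄,w̄), regarded as a linear map from ℝⁿ to ℝⁿ, has trivial kernel, then the stationary point set map S has the Robinson stability at ω₀=(x̄,w̄,0). -/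
noncomputable section

/-- The partial gradient in `x` of a function `f : ℝⁿ × ℝ^d → ℝ`. -/
def gradx {n d : ℕ} (f : En n × En d → ℝ) (x : En n) (w : En d) : En n :=
  gradient (fun y => f (y, w)) x

/-- The stationary (KKT) point set `S(w)` of the problem
`minimize f₀(x,w) subject to F(x,w) ≤ 0`. -/
def Sgen {n d : ℕ} (f₀ F : En n × En d → ℝ) (w : En d) : Set (En n) :=
  {x | F (x, w) ≤ 0 ∧ ∃ μ : ℝ, 0 ≤ μ ∧
    gradx f₀ x w + μ • gradx F x w = 0 ∧ μ * F (x, w) = 0}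

/-- The set `Φ(x,w) = {∇ₓf₀(x,w) + μ∇ₓF(x,w) : μ ≥ 0, μ·F(x,w) = 0}` when
`F(x,w) ≤ 0` (and `∅` otherwise). -/
def PhiGen {n d : ℕ} (f₀ F : En n × En d → ℝ) (x : En n) (w : En d) : Set (En n) :=
  {z | F (x, w) ≤ 0 ∧ ∃ μ : ℝ, 0 ≤ μ ∧ μ * F (x, w) = 0 ∧
    z = gradx f₀ x w + μ • gradx F x w}

/-- `S` has the Robinson stability at `ω₀ = (x0, w0, 0)`: there exist `r > 0`, `γ > 0`
and neighborhoods `U` of `x0`, `V` of `w0` such that `d(x, S(w)) ≤ r · d(0, Φ(x,w))`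
for all `(x,w) ∈ U × V` with `Φ(x,w) ≠ ∅` and `d(0, Φ(x,w)) < γ`. -/
def RobinsonStable {n d : ℕ} (f₀ F : En n × En d → ℝ) (w0 : En d) (x0 : En n) : Prop :=
  ∃ r : ℝ, 0 < r ∧ ∃ γ : ℝ, 0 < γ ∧ ∃ U ∈ nhds x0, ∃ V ∈ nhds w0,
    ∀ x ∈ U, ∀ w ∈ V, (PhiGen f₀ F x w).Nonempty →
      Metric.infDist 0 (PhiGen f₀ F x w) < γ →
      Metric.infDist x (Sgen f₀ F w) ≤ r * Metric.infDist 0 (PhiGen f₀ F x w)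

namespace Stmt7Aux

variable {n d : ℕ}

/-- The "joint" gradient-in-x map. -/
def gmap (f : En n × En d → ℝ) (p : En n × En d) : En n :=
  (InnerProductSpace.toDual ℝ (En n)).symm
    ((fderiv ℝ f p).comp (ContinuousLinearMap.inl ℝ (En n) (En d)))

lemma gradx_eq_gmap (f : En n × En d → ℝ) (hf : ContDiff ℝ 2 f) (p : En n × En d) :
    gradx f p.1 p.2 = gmap f p := by
  have h1 : HasFDerivAt (fun y : En n => (y, p.2))
      (ContinuousLinearMap.inl ℝ (En n) (En d)) p.1 := hasFDerivAt_prodMk_left _ _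
  have h2 : HasFDerivAt f (fderiv ℝ f p) p :=
    (hf.differentiable (by norm_num) p).hasFDerivAt
  have h3 : HasFDerivAt (fun y : En n => f (y, p.2))
      ((fderiv ℝ f p).comp (ContinuousLinearMap.inl ℝ (En n) (En d))) p.1 := h2.comp p.1 h1
  unfold gradx gradient gmap
  rw [h3.fderiv]

lemma contDiff_gmap (f : En n × En d → ℝ) (hf : ContDiff ℝ 2 f) :
    ContDiff ℝ 1 (gmap f) := by
  have h1 : ContDiff ℝ 1 (fderiv ℝ f) := hf.fderiv_right (by norm_num)
  have h2 : ContDiff ℝ 1 (fun p : En n × En d =>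
      (fderiv ℝ f p).comp (ContinuousLinearMap.inl ℝ (En n) (En d))) :=
    ((ContinuousLinearMap.compL ℝ (En n) (En n × En d) ℝ).flip
      (ContinuousLinearMap.inl ℝ (En n) (En d))).contDiff.comp h1
  exact ((InnerProductSpace.toDual ℝ (En n)).symm.toContinuousLinearEquiv.toContinuousLinearMap.contDiff).comp h2

end Stmt7Aux

open Stmt7Aux

/-- If `F(x0,w0) < 0`, `∇ₓf₀(x0,w0) = 0` and the Hessian
`∇²ₓₓf₀(x0,w0)` has trivial kernel, then `S` has the Robinson stability at
`ω₀ = (x0, w0, 0)`. -/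
theorem stmt7 {n d : ℕ} (f₀ F : En n × En d → ℝ)
    (hf₀ : ContDiff ℝ 2 f₀) (hF : ContDiff ℝ 2 F)
    (x0 : En n) (w0 : En d)
    (hFlt : F (x0, w0) < 0)
    (hstat : gradx f₀ x0 w0 = 0)
    (hker : ∀ v : En n,
      (fderiv ℝ (fun y => gradx f₀ y w0) x0) v = 0 → v = 0) :
    RobinsonStable f₀ F w0 x0 := by
  unfold RobinsonStable
  set g := gmap f₀ with hgdef
  have hgx : ∀ p : En n × En d, gradx f₀ p.1 p.2 = g p := gradx_eq_gmap f₀ hf₀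
  have hg : ContDiff ℝ 1 g := contDiff_gmap f₀ hf₀
  -- the map G
  set G : En n × En d → En n × En d := fun p => (g p, p.2) with hGdef
  have hg0 : g (x0, w0) = 0 := by rw [← hgx (x0, w0)]; exact hstat
  have hG0 : G (x0, w0) = (0, w0) := by simp [hGdef, hg0]
  set Dg := fderiv ℝ g (x0, w0) with hDg
  have hgs : HasStrictFDerivAt g Dg (x0, w0) := hg.contDiffAt.hasStrictFDerivAt (by norm_num)
  set M : (En n × En d) →L[ℝ] (En n × En d) :=
    Dg.prod (ContinuousLinearMap.snd ℝ (En n) (En d)) with hM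
  have hGs : HasStrictFDerivAt G M (x0, w0) := HasStrictFDerivAt.prodMk hgs (hasStrictFDerivAt_snd)
  -- A = Dg ∘ inl
  have hA : fderiv ℝ (fun y => gradx f₀ y w0) x0
      = Dg.comp (ContinuousLinearMap.inl ℝ (En n) (En d)) := by
    have h1 : HasFDerivAt (fun y : En n => (y, w0))
        (ContinuousLinearMap.inl ℝ (En n) (En d)) x0 := hasFDerivAt_prodMk_left _ _
    have h2 : HasFDerivAt g Dg (x0, w0) := hgs.hasFDerivAt
    have h3 : HasFDerivAt (fun y : En n => g (y, w0))
        (Dg.comp (ContinuousLinearMap.inl ℝ (En n) (En d))) x0 := HasFDerivAt.comp (g := g) (f := fun y : En n => (y, w0)) x0 h2 h1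
    have : (fun y : En n => gradx f₀ y w0) = fun y : En n => g (y, w0) := by
      funext y; exact hgx (y, w0)
    rw [this, h3.fderiv]
  -- M is bijective
  have hMinj : Function.Injective M := by
    intro p q hpq
    have h2 : p.2 = q.2 := by simpa [hM] using congrArg Prod.snd hpq
    have h1 : Dg p = Dg q := by simpa [hM] using congrArg Prod.fst hpq
    have hd : Dg (p - q) = 0 := by rw [map_sub, h1, sub_self]
    have hsnd : (p - q).2 = 0 := by simp [h2]
    have hrw : p - q = ((p - q).1, (0 : En d)) := by
      ext1
      · rfl
      · exact hsnd
    have : Dg (ContinuousLinearMap.inl ℝ (En n) (En d) (p - q).1) = 0 := by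
      rw [ContinuousLinearMap.inl_apply, ← hrw, hd]
    have h0 : (p - q).1 = 0 := hker _ (by rw [hA]; exact this)
    have : p - q = 0 := by rw [hrw, h0]; rfl
    exact sub_eq_zero.1 this
  have hMbij : Function.Bijective M :=
    ⟨hMinj, LinearMap.injective_iff_surjective.1 hMinj⟩
  set e : (En n × En d) ≃L[ℝ] (En n × En d) :=
    (LinearEquiv.ofBijective (M : (En n × En d) →ₗ[ℝ] (En n × En d)) hMbij).toContinuousLinearEquiv
    with he
  have hecoe : (e : (En n × En d) →L[ℝ] (En n × En d)) = M := by ext p <;> rfl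
  have hGe : HasStrictFDerivAt G (e : (En n × En d) →L[ℝ] (En n × En d)) (x0, w0) := by
    rw [hecoe]; exact hGs
  -- inverse function theorem
  set Hinv : En n × En d → En n × En d := hGe.localInverse G e (x0, w0) with hHinv
  have hinvd : HasStrictFDerivAt Hinv
      ((e.symm : (En n × En d) →L[ℝ] (En n × En d))) (G (x0, w0)) := hGe.to_localInverse
  obtain ⟨K, T, hT, hlip⟩ := hinvd.exists_lipschitzOnWith
  have hFcont : Continuous F := hF.continuous
  have hGcont : ContinuousAt G (x0, w0) := hGs.hasFDerivAt.continuousAt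
  -- p-space events
  have E1 : ∀ᶠ p : En n × En d in nhds (x0, w0), Hinv (G p) = p := hGe.eventually_left_inverse
  have E2 : ∀ᶠ p : En n × En d in nhds (x0, w0), F p < 0 :=
    (hFcont.tendsto (x0, w0)).eventually (gt_mem_nhds hFlt)
  have E3 : ∀ᶠ p : En n × En d in nhds (x0, w0), G p ∈ T := hGcont.eventually (by
    exact Filter.eventually_mem_set.2 hT)
  -- q-space events, at (0, w0)
  have E4 : ∀ᶠ q in nhds (G (x0, w0)), G (Hinv q) = q := hGe.eventually_right_inverse
  have E5 : ∀ᶠ q in nhds (G (x0, w0)), q ∈ T := Filter.eventually_mem_set.2 hT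
  have hinvcont : ContinuousAt Hinv (G (x0, w0)) := hGe.localInverse_continuousAt
  have hval : Hinv (G (x0, w0)) = (x0, w0) := hGe.localInverse_apply_image
  have hc6 : ContinuousAt (fun q => F (Hinv q)) (G (x0, w0)) :=
    (hFcont.continuousAt).comp hinvcont
  have E6 : ∀ᶠ q in nhds (G (x0, w0)), F (Hinv q) < 0 :=
    hc6.eventually (gt_mem_nhds (show F (Hinv (G (x0, w0))) < 0 by rw [hval]; exact hFlt))
  rw [hG0] at E4 E5 E6
  have hcw : Filter.Tendsto (fun w : En d => ((0 : En n), w)) (nhds w0) (nhds ((0 : En n), w0)) :=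
    (Continuous.prodMk_right (0 : En n)).tendsto w0
  have E456 : ∀ᶠ w in nhds w0, G (Hinv ((0 : En n), w)) = ((0 : En n), w) ∧
      ((0 : En n), w) ∈ T ∧ F (Hinv ((0 : En n), w)) < 0 :=
    hcw.eventually (E4.and (E5.and E6))
  -- extract product neighborhoods
  obtain ⟨U, hU, V1, hV1, hUV⟩ := mem_nhds_prod_iff.1 (E1.and (E2.and E3))
  have hV2 : {w | G (Hinv ((0 : En n), w)) = ((0 : En n), w) ∧
      ((0 : En n), w) ∈ T ∧ F (Hinv ((0 : En n), w)) < 0} ∈ nhds w0 := E456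
  refine ⟨(K : ℝ) + 1, by positivity, 1, one_pos, U, hU, V1 ∩ {w | G (Hinv ((0 : En n), w)) = ((0 : En n), w) ∧
      ((0 : En n), w) ∈ T ∧ F (Hinv ((0 : En n), w)) < 0}, Filter.inter_mem hV1 hV2, ?_⟩
  intro x hx w hw _ _
  obtain ⟨hw1, hq1, hq2, hq3⟩ := hw
  have hp := hUV (Set.mk_mem_prod hx hw1)
  obtain ⟨hp1, hp2, hp3⟩ := hp
  -- the stationary point z
  set z : En n := (Hinv ((0 : En n), w)).1 with hz
  have hsnd : (Hinv ((0 : En n), w)).2 = w := by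
    have h := congrArg Prod.snd hq1
    simpa [hGdef] using h
  have hzw : Hinv ((0 : En n), w) = (z, w) := by
    ext1
    · rfl
    · exact hsnd
  have hgz : g (z, w) = 0 := by
    have h := congrArg Prod.fst hq1
    rw [hzw] at h
    simpa [hGdef] using h
  have hFz : F (z, w) < 0 := by rw [hzw] at hq3; exact hq3
  have hzS : z ∈ Sgen f₀ F w := by
    refine ⟨hFz.le, 0, le_rfl, ?_, zero_mul _⟩
    rw [zero_smul, add_zero, show gradx f₀ z w = g (z, w) from hgx (z, w), hgz]
  -- Phi is a singleton
  have hPhi : PhiGen f₀ F x w = {gradx f₀ x w} := by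
    ext z'
    simp only [PhiGen, Set.mem_setOf_eq, Set.mem_singleton_iff]
    constructor
    · rintro ⟨_, μ, hμ0, hμF, rfl⟩
      have hμ : μ = 0 := by
        rcases mul_eq_zero.1 hμF with h | h
        · exact h
        · exact absurd h (ne_of_lt hp2)
      simp [hμ]
    · intro h
      exact ⟨hp2.le, 0, le_rfl, zero_mul _, by simp [h]⟩
  have hdist : Metric.infDist 0 (PhiGen f₀ F x w) = ‖g (x, w)‖ := by
    rw [hPhi, Metric.infDist_singleton, dist_zero_left, hgx (x, w)]
  -- Lipschitz estimate
  have hGT : G (x, w) ∈ T := hp3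
  have h1 := hlip.dist_le_mul _ hGT _ hq2
  rw [hp1, hzw] at h1
  have key : dist x z ≤ (K : ℝ) * ‖g (x, w)‖ := by
    calc dist x z ≤ dist ((x, w) : En n × En d) (z, w) := by
          rw [Prod.dist_eq]; exact le_max_left _ _
    _ ≤ (K : ℝ) * dist (G (x, w)) ((0 : En n), w) := h1
    _ = (K : ℝ) * ‖g (x, w)‖ := by
          have : dist (G (x, w)) ((0 : En n), w) = ‖g (x, w)‖ := by
            rw [show G (x, w) = (g (x, w), w) from rfl, Prod.dist_eq]
            simp [dist_zero_right]
          rw [this]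
  calc Metric.infDist x (Sgen f₀ F w) ≤ dist x z := Metric.infDist_le_dist_of_mem hzS
  _ ≤ (K : ℝ) * ‖g (x, w)‖ := key
  _ ≤ ((K : ℝ) + 1) * ‖g (x, w)‖ :=
      mul_le_mul_of_nonneg_right (by linarith) (norm_nonneg _)
  _ = ((K : ℝ) + 1) * Metric.infDist 0 (PhiGen f₀ F x w) := by rw [hdist]
end
end

section
/- Let f₀,F : ℝⁿ×ℝ^d → ℝ be C² functions and let (x̄,w̄) satisfy F(x̄,w̄) = 0, ∇ₓF(x̄,w̄) ≠ 0, and suppose there is λ > 0 with ∇ₓf₀(x̄,w̄)+λ∇ₓF(x̄,w̄) = 0 (positive Lagrange multiplier). If the only pair (v,γ) ∈ ℝⁿ×ℝ satisfying (∇²ₓₓf₀(x̄,w̄)+λ∇²ₓₓF(x̄,w̄))v + γ∇ₓF(x̄,w̄) = 0 and ⟨∇ₓF(x̄,w̄), v⟩ = 0 is (0,0), then the stationary point set map S has the Robinson stability at ω₀=(x̄,w̄,0). -/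
noncomputable section

open InnerProductSpace ContinuousLinearMap

/-- Full-space version of the partial gradient in `x`. -/
def gradFull {n d : ℕ} (f : En n × En d → ℝ) (p : En n × En d) : En n :=
  (toDual ℝ (En n)).symm ((fderiv ℝ f p).comp (ContinuousLinearMap.inl ℝ (En n) (En d)))

lemma gradx_eq_gradFull {n d : ℕ} {f : En n × En d → ℝ} (hf : Differentiable ℝ f)
    (x : En n) (w : En d) : gradx f x w = gradFull f (x, w) := by
  unfold gradx gradFull gradient
  congr 1
  exact (((hf (x, w)).hasFDerivAt).comp x (hasFDerivAt_prodMk_left x w)).fderiv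

lemma contDiff_gradFull {n d : ℕ} {f : En n × En d → ℝ} (hf : ContDiff ℝ 2 f) :
    ContDiff ℝ 1 (gradFull f) := by
  have h1 : ContDiff ℝ 1 (fderiv ℝ f) := hf.fderiv_right (by norm_num)
  have h2 : ContDiff ℝ 1
      (fun p => (fderiv ℝ f p).comp (ContinuousLinearMap.inl ℝ (En n) (En d))) :=
    h1.clm_comp contDiff_const
  exact ((toDual ℝ (En n)).symm.contDiff).comp h2

lemma inner_gradFull {n d : ℕ} {f : En n × En d → ℝ} (p : En n × En d) (v : En n) :
    @inner ℝ _ _ (gradFull f p) v = fderiv ℝ f p (v, 0) := by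
  rw [gradFull, toDual_symm_apply]
  rfl

/-- The KKT system map `G(x,μ,w) = (∇ₓL(x,μ,w), F(x,w), w)`. -/
def Gmap {n d : ℕ} (f₀ F : En n × En d → ℝ) (p : En n × ℝ × En d) : En n × ℝ × En d :=
  (gradFull f₀ (p.1, p.2.2) + p.2.1 • gradFull F (p.1, p.2.2), F (p.1, p.2.2), p.2.2)

def πmap (n d : ℕ) : (En n × ℝ × En d) →L[ℝ] (En n × En d) :=
  (ContinuousLinearMap.fst ℝ (En n) (ℝ × En d)).prod
    ((ContinuousLinearMap.snd ℝ ℝ (En d)).comp (ContinuousLinearMap.snd ℝ (En n) (ℝ × En d)))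
def pr2map (n d : ℕ) : (En n × ℝ × En d) →L[ℝ] ℝ :=
  (ContinuousLinearMap.fst ℝ ℝ (En d)).comp (ContinuousLinearMap.snd ℝ (En n) (ℝ × En d))
def pr3map (n d : ℕ) : (En n × ℝ × En d) →L[ℝ] En d :=
  (ContinuousLinearMap.snd ℝ ℝ (En d)).comp (ContinuousLinearMap.snd ℝ (En n) (ℝ × En d))

/-- The derivative of the KKT system map at `(x0, lam, w0)`. -/
def Dmap {n d : ℕ} (f₀ F : En n × En d → ℝ) (x0 : En n) (w0 : En d) (lam : ℝ) :
    (En n × ℝ × En d) →L[ℝ] (En n × ℝ × En d) :=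
  (((fderiv ℝ (gradFull f₀) (x0, w0)).comp (πmap n d)) +
      (lam • ((fderiv ℝ (gradFull F) (x0, w0)).comp (πmap n d)) +
        (pr2map n d).smulRight (gradFull F (x0, w0)))).prod
    (((fderiv ℝ F (x0, w0)).comp (πmap n d)).prod (pr3map n d))

lemma contDiff_Gmap {n d : ℕ} {f₀ F : En n × En d → ℝ}
    (hf₀ : ContDiff ℝ 2 f₀) (hF : ContDiff ℝ 2 F) :
    ContDiff ℝ 1 (Gmap f₀ F) := by
  have hπ : ContDiff ℝ 1 (fun p : En n × ℝ × En d => (p.1, p.2.2)) :=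
    contDiff_fst.prodMk (contDiff_snd.comp contDiff_snd)
  exact (((contDiff_gradFull hf₀).comp hπ).add
    (((contDiff_fst.comp contDiff_snd).smul ((contDiff_gradFull hF).comp hπ)))).prodMk
    (((hF.of_le (by norm_num)).comp hπ).prodMk (contDiff_snd.comp contDiff_snd))

lemma hasStrictFDerivAt_Gmap {n d : ℕ} {f₀ F : En n × En d → ℝ} (hf₀ : ContDiff ℝ 2 f₀)
    (hF : ContDiff ℝ 2 F) (x0 : En n) (w0 : En d) (lam : ℝ) :
    HasStrictFDerivAt (Gmap f₀ F) (Dmap f₀ F x0 w0 lam) (x0, lam, w0) := by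
  have hπ : HasStrictFDerivAt (fun p : En n × ℝ × En d => (p.1, p.2.2)) (πmap n d)
      (x0, lam, w0) := (πmap n d).hasStrictFDerivAt
  have hDf1 : HasStrictFDerivAt (gradFull f₀) (fderiv ℝ (gradFull f₀) (x0, w0)) (x0, w0) :=
    ((contDiff_gradFull hf₀).contDiffAt).hasStrictFDerivAt (by norm_num)
  have hDF1 : HasStrictFDerivAt (gradFull F) (fderiv ℝ (gradFull F) (x0, w0)) (x0, w0) :=
    ((contDiff_gradFull hF).contDiffAt).hasStrictFDerivAt (by norm_num)
  have hDF : HasStrictFDerivAt F (fderiv ℝ F (x0, w0)) (x0, w0) :=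
    (hF.contDiffAt).hasStrictFDerivAt (by norm_num)
  have h1 : HasStrictFDerivAt (fun p : En n × ℝ × En d => gradFull f₀ (p.1, p.2.2))
      ((fderiv ℝ (gradFull f₀) (x0, w0)).comp (πmap n d)) (x0, lam, w0) :=
    hDf1.comp (x0, lam, w0) hπ
  have h2 : HasStrictFDerivAt (fun p : En n × ℝ × En d => gradFull F (p.1, p.2.2))
      ((fderiv ℝ (gradFull F) (x0, w0)).comp (πmap n d)) (x0, lam, w0) :=
    hDF1.comp (x0, lam, w0) hπ
  have hμ : HasStrictFDerivAt (fun p : En n × ℝ × En d => p.2.1) (pr2map n d) (x0, lam, w0) :=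
    (pr2map n d).hasStrictFDerivAt
  have hsm := hμ.smul h2
  have hFc : HasStrictFDerivAt (fun p : En n × ℝ × En d => F (p.1, p.2.2))
      ((fderiv ℝ F (x0, w0)).comp (πmap n d)) (x0, lam, w0) := hDF.comp (x0, lam, w0) hπ
  have hw : HasStrictFDerivAt (fun p : En n × ℝ × En d => p.2.2) (pr3map n d) (x0, lam, w0) :=
    (pr3map n d).hasStrictFDerivAt
  exact (h1.add hsm).prodMk (hFc.prodMk hw)

lemma fderiv_gradx_eq {n d : ℕ} {f : En n × En d → ℝ} (hf : ContDiff ℝ 2 f)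
    (x0 : En n) (w0 : En d) (v : En n) :
    fderiv ℝ (fun y => gradx f y w0) x0 v = fderiv ℝ (gradFull f) (x0, w0) (v, 0) := by
  have hdiff : Differentiable ℝ f := hf.differentiable (by norm_num)
  have hfun : (fun y => gradx f y w0) = fun y => gradFull f (y, w0) := by
    funext y; exact gradx_eq_gradFull hdiff y w0
  have hD : DifferentiableAt ℝ (gradFull f) (x0, w0) :=
    ((contDiff_gradFull hf).differentiable (by norm_num)).differentiableAt
  have h := ((hD.hasFDerivAt).comp x0 (hasFDerivAt_prodMk_left (𝕜 := ℝ) x0 w0)).fderiv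
  rw [hfun]
  show fderiv ℝ (gradFull f ∘ fun y => (y, w0)) x0 v = _
  rw [h]
  rfl

open RealInnerProductSpace in
lemma Dmap_injective {n d : ℕ} {f₀ F : En n × En d → ℝ}
    (hf₀ : ContDiff ℝ 2 f₀) (hF : ContDiff ℝ 2 F)
    (x0 : En n) (w0 : En d) (lam : ℝ)
    (hreg : ∀ (v : En n) (γ : ℝ),
      (fderiv ℝ (fun y => gradx f₀ y w0) x0) v
        + lam • (fderiv ℝ (fun y => gradx F y w0) x0) v
        + γ • gradx F x0 w0 = 0 →
      ⟪gradx F x0 w0, v⟫ = 0 → v = 0 ∧ γ = 0) :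
    Function.Injective (Dmap f₀ F x0 w0 lam) := by
  have hdF : Differentiable ℝ F := hF.differentiable (by norm_num)
  rw [injective_iff_map_eq_zero]
  intro e he
  obtain ⟨v, δ, u⟩ := e
  have h3 : u = 0 := congrArg (fun q => q.2.2) he
  subst h3
  have h1 : fderiv ℝ (gradFull f₀) (x0, w0) (v, 0)
      + (lam • fderiv ℝ (gradFull F) (x0, w0) (v, 0) + δ • gradFull F (x0, w0)) = 0 :=
    congrArg (fun q => q.1) he
  have h2 : fderiv ℝ F (x0, w0) (v, 0) = 0 := congrArg (fun q => q.2.1) he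
  have hin : ⟪gradx F x0 w0, v⟫ = 0 := by
    rw [gradx_eq_gradFull hdF, inner_gradFull, h2]
  have heq : (fderiv ℝ (fun y => gradx f₀ y w0) x0) v
      + lam • (fderiv ℝ (fun y => gradx F y w0) x0) v + δ • gradx F x0 w0 = 0 := by
    rw [fderiv_gradx_eq hf₀, fderiv_gradx_eq hF, gradx_eq_gradFull hdF, add_assoc]
    exact h1
  obtain ⟨hv, hδ⟩ := hreg v δ heq hin
  simp [hv, hδ, Prod.ext_iff]

/-- The derivative of the KKT map as a continuous linear equivalence. -/
def Dequiv {n d : ℕ} {f₀ F : En n × En d → ℝ} {x0 : En n} {w0 : En d} {lam : ℝ}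
    (hinj : Function.Injective (Dmap f₀ F x0 w0 lam)) :
    (En n × ℝ × En d) ≃L[ℝ] (En n × ℝ × En d) :=
  (LinearEquiv.ofBijective (Dmap f₀ F x0 w0 lam).toLinearMap
    ⟨hinj, (LinearMap.injective_iff_surjective
      (f := (Dmap f₀ F x0 w0 lam).toLinearMap)).1 hinj⟩).toContinuousLinearEquiv

lemma Dequiv_coe {n d : ℕ} {f₀ F : En n × En d → ℝ} {x0 : En n} {w0 : En d} {lam : ℝ}
    (hinj : Function.Injective (Dmap f₀ F x0 w0 lam)) :
    (Dequiv hinj : (En n × ℝ × En d) →L[ℝ] (En n × ℝ × En d)) = Dmap f₀ F x0 w0 lam := by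
  ext e <;> rfl


open RealInnerProductSpace in
/-- If `F(x0,w0) = 0`, `∇ₓF(x0,w0) ≠ 0`, the Lagrange multiplier
`λ > 0`, and the only `(v,γ)` with `(∇²ₓₓf₀ + λ∇²ₓₓF)v + γ∇ₓF = 0` and
`⟨∇ₓF, v⟩ = 0` is `(0,0)`, then `S` has the Robinson stability at `ω₀ = (x0, w0, 0)`. -/
theorem stmt8 {n d : ℕ} (f₀ F : En n × En d → ℝ)
    (hf₀ : ContDiff ℝ 2 f₀) (hF : ContDiff ℝ 2 F)
    (x0 : En n) (w0 : En d) (lam : ℝ)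
    (hFeq : F (x0, w0) = 0)
    (hgF : gradx F x0 w0 ≠ 0)
    (hlam : 0 < lam)
    (hKKT : gradx f₀ x0 w0 + lam • gradx F x0 w0 = 0)
    (hreg : ∀ (v : En n) (γ : ℝ),
      (fderiv ℝ (fun y => gradx f₀ y w0) x0) v
        + lam • (fderiv ℝ (fun y => gradx F y w0) x0) v
        + γ • gradx F x0 w0 = 0 →
      ⟪gradx F x0 w0, v⟫ = 0 → v = 0 ∧ γ = 0) :
    RobinsonStable f₀ F w0 x0 := by
  classical
  have hdf₀ : Differentiable ℝ f₀ := hf₀.differentiable (by norm_num)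
  have hdF : Differentiable ℝ F := hF.differentiable (by norm_num)
  set g : En n := gradx F x0 w0 with hg
  set c : ℝ := ‖g‖ with hc
  have hcpos : 0 < c := norm_pos_iff.mpr hgF
  -- the strict derivative equivalence and local inverse
  have hinj := Dmap_injective hf₀ hF x0 w0 lam hreg
  set Deq := Dequiv hinj with hDeq
  have hGs : HasStrictFDerivAt (Gmap f₀ F)
      (Deq : (En n × ℝ × En d) →L[ℝ] (En n × ℝ × En d)) (x0, lam, w0) := by
    rw [hDeq, Dequiv_coe hinj]
    exact hasStrictFDerivAt_Gmap hf₀ hF x0 w0 lam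
  set p0 : En n × ℝ × En d := (x0, lam, w0) with hp0
  have hGp0 : Gmap f₀ F p0 = ((0 : En n), (0 : ℝ), w0) := by
    show (gradFull f₀ (x0, w0) + lam • gradFull F (x0, w0), F (x0, w0), w0) = _
    rw [← gradx_eq_gradFull hdf₀, ← gradx_eq_gradFull hdF, hKKT, hFeq]
  set q0 : En n × ℝ × En d := ((0 : En n), (0 : ℝ), w0) with hq0
  set Ginv := hGs.localInverse (Gmap f₀ F) Deq p0 with hGinv
  have L1 : ∀ᶠ p in nhds p0, Ginv (Gmap f₀ F p) = p := hGs.eventually_left_inverse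
  have L2 : ∀ᶠ q in nhds q0, Gmap f₀ F (Ginv q) = q := by
    have := hGs.eventually_right_inverse
    rwa [hGp0] at this
  have hinvd : HasStrictFDerivAt Ginv
      ((Deq.symm : (En n × ℝ × En d) →L[ℝ] (En n × ℝ × En d))) q0 := by
    have := hGs.to_localInverse
    rwa [hGp0] at this
  obtain ⟨K, s, hs_mem, hlip⟩ := hinvd.exists_lipschitzOnWith
  have hcontinv : ContinuousAt Ginv q0 := by
    have := hGs.localInverse_continuousAt
    rwa [hGp0] at this
  have hGinvq0 : Ginv q0 = p0 := by
    have := hGs.localInverse_apply_image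
    rwa [hGp0] at this
  -- eventual properties at q0
  have hμev : ∀ᶠ q in nhds q0, 0 < (Ginv q).2.1 := by
    have hμcont : ContinuousAt (fun q => (Ginv q).2.1) q0 :=
      (continuous_fst.comp continuous_snd).continuousAt.comp hcontinv
    have hval : (Ginv q0).2.1 = lam := by rw [hGinvq0]
    have : Filter.Tendsto (fun q => (Ginv q).2.1) (nhds q0) (nhds lam) := hval ▸ hμcont
    exact this.eventually (eventually_gt_nhds hlam)
  have T2ev : ∀ᶠ q in nhds q0,
      Gmap f₀ F (Ginv q) = q ∧ q ∈ s ∧ 0 < (Ginv q).2.1 := by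
    have hsev : ∀ᶠ q in nhds q0, q ∈ s := hs_mem
    exact L2.and (hsev.and hμev)
  -- pull back along w ↦ (0,0,w)
  have hwq : Filter.Tendsto (fun w : En d => ((0 : En n), (0 : ℝ), w)) (nhds w0) (nhds q0) := by
    have : Continuous (fun w : En d => ((0 : En n), (0 : ℝ), w)) :=
      continuous_const.prodMk (continuous_const.prodMk continuous_id)
    exact this.continuousAt
  have V₁ev : ∀ᶠ w in nhds w0,
      Gmap f₀ F (Ginv ((0 : En n), (0 : ℝ), w)) = ((0 : En n), (0 : ℝ), w) ∧
      ((0 : En n), (0 : ℝ), w) ∈ s ∧ 0 < (Ginv ((0 : En n), (0 : ℝ), w)).2.1 :=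
    hwq.eventually T2ev
  -- eventual properties at p0
  have hGcont : Continuous (Gmap f₀ F) := (contDiff_Gmap hf₀ hF).continuous
  have hGsev : ∀ᶠ p in nhds p0, Gmap f₀ F p ∈ s := by
    have : Filter.Tendsto (Gmap f₀ F) (nhds p0) (nhds q0) := hGp0 ▸ hGcont.continuousAt
    exact this.eventually_mem hs_mem
  obtain ⟨ε₁, hε₁, hball⟩ := Metric.eventually_nhds_iff_ball.1 (L1.and hGsev)
  -- the constants
  set ρ : ℝ := min ε₁ lam with hρ
  have hρpos : 0 < ρ := lt_min hε₁ hlam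
  set γ : ℝ := ρ * c / 8 with hγ
  have hγpos : 0 < γ := by positivity
  -- the neighborhood where the gradient bounds hold
  have W₁ev : ∀ᶠ p : En n × En d in nhds (x0, w0),
      ‖gradFull f₀ p + lam • gradFull F p‖ < γ ∧ c / 2 < ‖gradFull F p‖ := by
    have hcont1 : Continuous (fun p : En n × En d => gradFull f₀ p + lam • gradFull F p) :=
      ((contDiff_gradFull hf₀).continuous).add (((contDiff_gradFull hF).continuous).const_smul lam)
    have hval1 : gradFull f₀ (x0, w0) + lam • gradFull F (x0, w0) = 0 := by
      rw [← gradx_eq_gradFull hdf₀, ← gradx_eq_gradFull hdF]; exact hKKT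
    have h1 : ∀ᶠ p : En n × En d in nhds (x0, w0),
        ‖gradFull f₀ p + lam • gradFull F p‖ < γ := by
      have ht : Filter.Tendsto (fun p : En n × En d => gradFull f₀ p + lam • gradFull F p)
          (nhds (x0, w0)) (nhds 0) := hval1 ▸ hcont1.continuousAt
      have : ∀ᶠ z : En n in nhds 0, ‖z‖ < γ := by
        filter_upwards [Metric.ball_mem_nhds (0 : En n) hγpos] with z hz
        simpa [dist_zero_right] using hz
      exact ht.eventually this
    have h2 : ∀ᶠ p : En n × En d in nhds (x0, w0), c / 2 < ‖gradFull F p‖ := by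
      have ht : Filter.Tendsto (fun p : En n × En d => ‖gradFull F p‖)
          (nhds (x0, w0)) (nhds c) := by
        have : ‖gradFull F (x0, w0)‖ = c := by rw [← gradx_eq_gradFull hdF]
        exact this ▸ (continuous_norm.comp (contDiff_gradFull hF).continuous).continuousAt
      exact ht.eventually (eventually_gt_nhds (by linarith))
    exact h1.and h2
  obtain ⟨U₂, hU₂, V₂, hV₂, hUV⟩ := mem_nhds_prod_iff.1 W₁ev
  -- final data
  refine ⟨(K : ℝ) + 1, by positivity, γ, hγpos,
    U₂ ∩ Metric.ball x0 ε₁, Filter.inter_mem hU₂ (Metric.ball_mem_nhds x0 hε₁),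
    V₂ ∩ ({w | (Gmap f₀ F (Ginv ((0 : En n), (0 : ℝ), w)) = ((0 : En n), (0 : ℝ), w) ∧
      ((0 : En n), (0 : ℝ), w) ∈ s ∧ 0 < (Ginv ((0 : En n), (0 : ℝ), w)).2.1)} ∩
      Metric.ball w0 ε₁),
    Filter.inter_mem hV₂ (Filter.inter_mem V₁ev (Metric.ball_mem_nhds w0 hε₁)), ?_⟩
  rintro x ⟨hxU₂, hxball⟩ w ⟨hwV₂, ⟨hw1, hw2, hw3⟩, hwball⟩ hΦne hΦlt
  -- the core claim
  have claim : ∀ z ∈ PhiGen f₀ F x w, ‖z‖ < γ →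
      Metric.infDist x (Sgen f₀ F w) ≤ ((K : ℝ) + 1) * ‖z‖ := by
    rintro z ⟨hFle, μ, hμ0, hμF, hzeq⟩ hzγ
    have hW : ‖gradFull f₀ (x, w) + lam • gradFull F (x, w)‖ < γ ∧
        c / 2 < ‖gradFull F (x, w)‖ := hUV ⟨hxU₂, hwV₂⟩
    have hb1 : ‖gradx f₀ x w + lam • gradx F x w‖ < γ := by
      rw [gradx_eq_gradFull hdf₀, gradx_eq_gradFull hdF]; exact hW.1
    have hb2 : c / 2 < ‖gradx F x w‖ := by
      rw [gradx_eq_gradFull hdF]; exact hW.2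
    -- bound |μ - lam|
    have hsub : (μ - lam) • gradx F x w
        = z - (gradx f₀ x w + lam • gradx F x w) := by
      rw [hzeq, sub_smul]; abel
    have hnorm1 : |μ - lam| * ‖gradx F x w‖ < 2 * γ := by
      have : ‖(μ - lam) • gradx F x w‖ ≤ ‖z‖ + ‖gradx f₀ x w + lam • gradx F x w‖ := by
        rw [hsub]; exact norm_sub_le _ _
      rw [norm_smul, Real.norm_eq_abs] at this
      linarith
    have hμlam : |μ - lam| < ρ := by
      have h1 : |μ - lam| * (c / 2) ≤ |μ - lam| * ‖gradx F x w‖ :=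
        mul_le_mul_of_nonneg_left (le_of_lt hb2) (abs_nonneg _)
      have h2 : |μ - lam| * (c / 2) < 2 * γ := lt_of_le_of_lt h1 hnorm1
      have : |μ - lam| < 4 * γ / c := by
        rw [lt_div_iff₀ hcpos]
        linarith
      have h4 : 4 * γ / c = ρ / 2 := by
        rw [hγ]; field_simp; ring
      rw [h4] at this
      linarith
    have hμpos : 0 < μ := by
      have : lam - μ ≤ |μ - lam| := by rw [abs_sub_comm]; exact le_abs_self _
      have hρlam : ρ ≤ lam := min_le_right _ _
      linarith
    have hFxw : F (x, w) = 0 := by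
      rcases mul_eq_zero.1 hμF with h | h
      · exact absurd h (ne_of_gt hμpos)
      · exact h
    -- the perturbed point p and reference point q
    set p : En n × ℝ × En d := (x, μ, w) with hp
    have hpball : p ∈ Metric.ball p0 ε₁ := by
      rw [Metric.mem_ball, Prod.dist_eq, Prod.dist_eq]
      have hd1 : dist x x0 < ε₁ := by simpa [Metric.mem_ball] using hxball
      have hd2 : dist μ lam < ε₁ := by
        rw [Real.dist_eq]
        exact lt_of_lt_of_le hμlam (min_le_left _ _)
      have hd3 : dist w w0 < ε₁ := by simpa [Metric.mem_ball] using hwball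
      exact max_lt hd1 (max_lt hd2 hd3)
    obtain ⟨hpinv, hpGs⟩ := hball p hpball
    set q : En n × ℝ × En d := ((0 : En n), (0 : ℝ), w) with hq
    set p' := Ginv q with hp'
    -- G p' = q
    have hGp' : Gmap f₀ F p' = q := hw1
    have hw' : p'.2.2 = w := congrArg (fun r => r.2.2) hGp'
    have hFp' : F (p'.1, w) = 0 := by
      have := congrArg (fun r => r.2.1) hGp'
      simpa [Gmap, hw'] using this
    have hgradp' : gradx f₀ p'.1 w + p'.2.1 • gradx F p'.1 w = 0 := by
      have := congrArg (fun r => r.1) hGp'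
      simp only [Gmap, hw'] at this
      rw [gradx_eq_gradFull hdf₀, gradx_eq_gradFull hdF]
      exact this
    have hμ'pos : 0 < p'.2.1 := hw3
    have hx'S : p'.1 ∈ Sgen f₀ F w :=
      ⟨le_of_eq hFp', p'.2.1, le_of_lt hμ'pos, hgradp', by rw [hFp', mul_zero]⟩
    -- Lipschitz estimate
    have hGpz : Gmap f₀ F p = (z, (0 : ℝ), w) := by
      show (gradFull f₀ (x, w) + μ • gradFull F (x, w), F (x, w), w) = _
      rw [← gradx_eq_gradFull hdf₀, ← gradx_eq_gradFull hdF, hFxw, ← hzeq]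
    have hdistGq : dist (Gmap f₀ F p) q ≤ ‖z‖ := by
      rw [hGpz, hq, Prod.dist_eq, Prod.dist_eq]
      simp [dist_zero_right]
    have hdistpp' : dist p p' ≤ (K : ℝ) * ‖z‖ := by
      have h := hlip.dist_le_mul (Gmap f₀ F p) hpGs q hw2
      rw [hpinv] at h
      calc dist p p' ≤ (K : ℝ) * dist (Gmap f₀ F p) q := h
        _ ≤ (K : ℝ) * ‖z‖ := mul_le_mul_of_nonneg_left hdistGq K.coe_nonneg
    have hdxx' : dist x p'.1 ≤ dist p p' := by
      rw [Prod.dist_eq]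
      exact le_max_left _ _
    calc Metric.infDist x (Sgen f₀ F w) ≤ dist x p'.1 :=
          Metric.infDist_le_dist_of_mem hx'S
      _ ≤ (K : ℝ) * ‖z‖ := le_trans hdxx' hdistpp'
      _ ≤ ((K : ℝ) + 1) * ‖z‖ :=
          mul_le_mul_of_nonneg_right (by linarith) (norm_nonneg z)
  -- pass to the infimum
  have key : ∀ b : ℝ, Metric.infDist 0 (PhiGen f₀ F x w) < b → b < γ →
      Metric.infDist x (Sgen f₀ F w) ≤ ((K : ℝ) + 1) * b := by
    intro b hb hbγ
    obtain ⟨z, hzΦ, hzb⟩ := (Metric.infDist_lt_iff hΦne).1 hb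
    have hzn : ‖z‖ < b := by rwa [dist_comm, dist_zero_right] at hzb
    calc Metric.infDist x (Sgen f₀ F w) ≤ ((K : ℝ) + 1) * ‖z‖ :=
          claim z hzΦ (lt_trans hzn hbγ)
      _ ≤ ((K : ℝ) + 1) * b := by
          apply mul_le_mul_of_nonneg_left (le_of_lt hzn)
          positivity
  have htend : Filter.Tendsto (fun b : ℝ => ((K : ℝ) + 1) * b)
      (nhdsWithin (Metric.infDist 0 (PhiGen f₀ F x w))
        (Set.Ioi (Metric.infDist 0 (PhiGen f₀ F x w))))
      (nhds (((K : ℝ) + 1) * Metric.infDist 0 (PhiGen f₀ F x w))) :=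
    ((continuous_const.mul continuous_id).continuousAt).tendsto.mono_left nhdsWithin_le_nhds
  refine ge_of_tendsto htend ?_
  have h2 : ∀ᶠ b in nhdsWithin (Metric.infDist 0 (PhiGen f₀ F x w))
      (Set.Ioi (Metric.infDist 0 (PhiGen f₀ F x w))), b < γ :=
    nhdsWithin_le_nhds (eventually_lt_nhds hΦlt)
  filter_upwards [self_mem_nhdsWithin, h2] with b hb1 hb2
  exact key b (Set.mem_Ioi.1 hb1) hb2
end
end
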